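/- arXiv:1507.03869 — 4 statements merged into one kernel-verified Lean document; each statement's English description precedes it below -/
import Mathlib

section
/- Let p ≠ 2 be a prime with p | D and p² ∤ D, and let l ≥ 1 be an integer such that p^{l+1} divides none of A, B, A−B, G(A,B). Suppose t = (t0,t1,t2,t3,t4) ∈ ℤ⁵ has at least one coordinate not divisible by p and satisfies Q1(t) ≡ 0 (mod p^{8l+1}) and Q2(t) ≡ 0 (mod p^{8l+1}). Then p^{4l+1} does not divide all 2×2 minors of the Jacobian matrix J = [[t1, t0, −2t2, 2D·t3, 0], [2t0+(A+B)t1, (A+B)t0+2AB·t1, −2t2, 0, 2D·t4]]; that is, some 2×2 minor (determinant of a 2×2 submatrix) of J is not divisible by p^{4l+1}. -/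
/-- The Jacobian matrix of the system `(Q1, Q2)` at the point `t`. -/
def jacobianBSD (D A B : ℤ) (t : Fin 5 → ℤ) : Matrix (Fin 2) (Fin 5) ℤ :=
  !![t 1, t 0, -2 * t 2, 2 * D * t 3, 0;
     2 * t 0 + (A + B) * t 1, (A + B) * t 0 + 2 * A * B * t 1, -2 * t 2, 0, 2 * D * t 4]

private lemma L0 {π : ℤ} (hπ : Prime π) (k : ℕ) {x y : ℤ} (hx : ¬ π ∣ x)
    (h : π ^ k ∣ x * y) : π ^ k ∣ y := by
  induction k generalizing y with
  | zero => rw [pow_zero]; exact one_dvd y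
  | succ k ih =>
    have h1 : π ∣ x * y := (dvd_pow_self π (Nat.succ_ne_zero k)).trans h
    have h2 : π ∣ y := ((hπ.dvd_mul).mp h1).resolve_left hx
    obtain ⟨y', rfl⟩ := h2
    have h3 : π ^ k ∣ x * y' := by
      have h4 : π * π ^ k ∣ π * (x * y') := by
        rw [← pow_succ']
        calc π ^ (k+1) ∣ x * (π * y') := h
        _ = π * (x * y') := by ring
      exact (mul_dvd_mul_iff_left hπ.ne_zero).mp h4
    rw [pow_succ']
    exact mul_dvd_mul_left π (ih h3)

private lemma L1 {π : ℤ} (hπ : Prime π) (s : ℕ) {x : ℤ} (n : ℕ) {y : ℤ} (hx : ¬ π ^ s ∣ x)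
    (h : π ^ (s + n) ∣ x * y) : π ^ (n + 1) ∣ y := by
  induction s generalizing x with
  | zero => exact absurd (by rw [pow_zero]; exact one_dvd x) hx
  | succ s ih =>
    by_cases hpx : π ∣ x
    · obtain ⟨x', rfl⟩ := hpx
      have hx' : ¬ π ^ s ∣ x' := by
        intro h'
        exact hx (by rw [pow_succ']; exact mul_dvd_mul_left π h')
      have h3 : π ^ (s + n) ∣ x' * y := by
        have h4 : π * π ^ (s + n) ∣ π * (x' * y) := by
          rw [← pow_succ']
          have h5 : π ^ (s + n + 1) ∣ π * x' * y := by
            rwa [show s + n + 1 = s + 1 + n from by omega]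
          calc π ^ (s + n + 1) ∣ π * x' * y := h5
          _ = π * (x' * y) := by ring
        exact (mul_dvd_mul_iff_left hπ.ne_zero).mp h4
      exact ih hx' h3
    · have := L0 hπ (s + 1 + n) hpx h
      exact (pow_dvd_pow π (by omega)).trans this

/-- Workhorse cancellation lemma. -/
private lemma Lw {π : ℤ} (hπ : Prime π) {s m k : ℕ} {x y : ℤ} (hx : ¬ π ^ s ∣ x)
    (h : π ^ m ∣ x * y) (hk : k + s ≤ m + 1) : π ^ k ∣ y := by
  rcases k with _ | k
  · rw [pow_zero]; exact one_dvd y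
  · have hs1 : 1 ≤ s := by
      rcases Nat.eq_zero_or_pos s with rfl | h'
      · exact absurd (by rw [pow_zero]; exact one_dvd x) hx
      · exact h'
    have hsm : s + (m - s) = m := by omega
    have h' : π ^ (s + (m - s)) ∣ x * y := by rw [hsm]; exact h
    have := L1 hπ s (m - s) hx h'
    exact (pow_dvd_pow π (by omega)).trans this

/-- Unit cancellation lemma. -/
private lemma Lw1 {π : ℤ} (hπ : Prime π) {m k : ℕ} {x y : ℤ} (hx : ¬ π ∣ x)
    (h : π ^ m ∣ x * y) (hk : k ≤ m) : π ^ k ∣ y :=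
  (pow_dvd_pow π hk).trans (L0 hπ m hx h)

private lemma extract {π : ℤ} (hπ : Prime π) (h2 : 2 ≤ π.natAbs) :
    ∀ (n : ℕ) (x : ℤ), x.natAbs ≤ n → x ≠ 0 → ∃ a u, ¬ π ∣ u ∧ x = π ^ a * u := by
  intro n
  induction n with
  | zero =>
    intro x h hx
    exact absurd (Int.natAbs_eq_zero.mp (Nat.le_zero.mp h)) hx
  | succ n ih =>
    intro x h hx
    by_cases hd : π ∣ x
    · obtain ⟨x', rfl⟩ := hd
      have hx' : x' ≠ 0 := by
        rintro rfl; simp at hx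
      have hpos : 1 ≤ x'.natAbs := Int.natAbs_pos.mpr hx'
      have hlt : x'.natAbs ≤ n := by
        rw [Int.natAbs_mul] at h
        nlinarith
      obtain ⟨a, u, hu, he⟩ := ih x' hlt hx'
      exact ⟨a + 1, u, hu, by rw [he]; ring⟩
    · exact ⟨0, x, hd, by simp⟩

private lemma not_pow_succ_dvd {π : ℤ} (hπ : Prime π) (a : ℕ) {u : ℤ} (hu : ¬ π ∣ u) :
    ¬ π ^ (a + 1) ∣ π ^ a * u := by
  intro h
  rw [pow_succ] at h
  exact hu ((mul_dvd_mul_iff_left (pow_ne_zero a hπ.ne_zero)).mp h)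

theorem stmt_0 (D A B : ℤ) (p : ℕ) (hp : p.Prime) (hp2 : p ≠ 2)
    (hpD : (p : ℤ) ∣ D) (hp2D : ¬ ((p : ℤ) ^ 2 ∣ D)) (l : ℕ) (hl : 1 ≤ l)
    (hA : ¬ ((p : ℤ) ^ (l + 1) ∣ A)) (hB : ¬ ((p : ℤ) ^ (l + 1) ∣ B))
    (hAB : ¬ ((p : ℤ) ^ (l + 1) ∣ (A - B)))
    (hG : ¬ ((p : ℤ) ^ (l + 1) ∣ (A ^ 2 - 2 * A * B + B ^ 2 - 2 * A - 2 * B + 1)))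
    (t : Fin 5 → ℤ) (hprim : ∃ i, ¬ ((p : ℤ) ∣ t i))
    (hQ1 : ((p : ℤ) ^ (8 * l + 1)) ∣ ((t 2) ^ 2 - D * (t 3) ^ 2 - t 0 * t 1))
    (hQ2 : ((p : ℤ) ^ (8 * l + 1)) ∣
      ((t 2) ^ 2 - D * (t 4) ^ 2 - (t 0 + A * t 1) * (t 0 + B * t 1))) :
    ∃ i j : Fin 5,
      ¬ ((p : ℤ) ^ (4 * l + 1) ∣
        (jacobianBSD D A B t 0 i * jacobianBSD D A B t 1 j -
         jacobianBSD D A B t 0 j * jacobianBSD D A B t 1 i)) := by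
  by_contra hcon
  push_neg at hcon
  set π : ℤ := (p : ℤ) with hπdef
  have hπ : Prime π := Nat.prime_iff_prime_int.mp hp
  have hπ0 : π ≠ 0 := hπ.ne_zero
  have hπ2 : ¬ π ∣ 2 := by
    intro h
    rw [hπdef] at h
    have h' : p ∣ 2 := by exact_mod_cast h
    exact hp2 ((Nat.prime_dvd_prime_iff_eq hp Nat.prime_two).mp h')
  obtain ⟨D', hD'⟩ := hpD
  have hD'p : ¬ π ∣ D' := by
    intro h
    obtain ⟨c, rfl⟩ := h
    exact hp2D ⟨c, by rw [hD']; ring⟩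
  -- the minors we need
  have F1 : π ^ (4*l+1) ∣ A * B * t 1 ^ 2 - t 0 ^ 2 := by
    have h := hcon 0 1
    simp [jacobianBSD] at h
    have h' : π ^ (4*l+1) ∣ 2 * (A * B * t 1 ^ 2 - t 0 ^ 2) := by
      convert h using 1; ring
    exact Lw1 hπ hπ2 h' le_rfl
  have F2 : π ^ (4*l+1) ∣ t 2 * (2 * t 0 + (A + B - 1) * t 1) := by
    have h := hcon 0 2
    simp [jacobianBSD] at h
    have h' : π ^ (4*l+1) ∣ 2 * (t 2 * (2 * t 0 + (A + B - 1) * t 1)) := by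
      convert h using 1; ring
    exact Lw1 hπ hπ2 h' le_rfl
  -- helper to peel 2 and D
  have peelD : ∀ z : ℤ, π ^ (4*l+1) ∣ 2 * (D * z) → π ^ (4*l) ∣ z := by
    intro z h
    have h1 : π ^ (4*l+1) ∣ D * z := Lw1 hπ hπ2 h le_rfl
    have h2 : π * π ^ (4*l) ∣ π * (D' * z) := by
      rw [← pow_succ']
      calc π ^ (4*l+1) ∣ D * z := h1
      _ = π * (D' * z) := by rw [hD']; ring
    have h3 : π ^ (4*l) ∣ D' * z := (mul_dvd_mul_iff_left hπ0).mp h2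
    exact L0 hπ (4*l) hD'p h3
  have F3 : π ^ (4*l) ∣ t 3 * (2 * t 0 + (A + B) * t 1) := by
    have h := hcon 0 3
    simp [jacobianBSD] at h
    apply peelD
    convert h using 1; rfl; ring
  have F4 : π ^ (4*l) ∣ t 1 * t 4 := by
    have h := hcon 0 4
    simp [jacobianBSD] at h
    apply peelD
    convert h using 1; ring
  have F6 : π ^ (4*l) ∣ t 3 * ((A + B) * t 0 + 2 * A * B * t 1) := by
    have h := hcon 1 3
    simp [jacobianBSD] at h
    apply peelD
    convert h using 1; rfl; ring
  have F7 : π ^ (4*l) ∣ t 0 * t 4 := by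
    have h := hcon 1 4
    simp [jacobianBSD] at h
    apply peelD
    convert h using 1; ring
  have F8 : π ^ (4*l) ∣ t 2 * t 3 := by
    have h := hcon 2 3
    simp [jacobianBSD] at h
    have h' : π ^ (4*l+1) ∣ 2 * (2 * (D * (t 2 * t 3))) := by
      convert h using 1; ring
    exact peelD _ (Lw1 hπ hπ2 h' le_rfl)
  have F9 : π ^ (4*l) ∣ t 2 * t 4 := by
    have h := hcon 2 4
    simp [jacobianBSD] at h
    have h' : π ^ (4*l+1) ∣ 2 * (2 * (D * (t 2 * t 4))) := by
      convert h using 1; rfl; ring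
    exact peelD _ (Lw1 hπ hπ2 h' le_rfl)
  clear hcon
  -- square cancellation : if π^{l+1} ∤ z then π^{2l+1} ∤ z^2
  have sqcan : ∀ z : ℤ, ¬ π ^ (l+1) ∣ z → ¬ π ^ (2*l+1) ∣ z ^ 2 := by
    intro z hz h
    have h' : π ^ (2*l+1) ∣ z * z := by rwa [← sq]
    exact hz (Lw hπ (s := l+1) hz h' (by omega))
  -- helper : cancel t1 twice
  have cant1 : ∀ (k : ℕ) (z : ℤ), ¬ π ∣ t 1 → π ^ k ∣ z * t 1 ^ 2 → π ^ k ∣ z := by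
    intro k z h1 h
    have h' : π ^ k ∣ t 1 * (t 1 * z) := by
      calc π ^ k ∣ z * t 1 ^ 2 := h
      _ = t 1 * (t 1 * z) := by ring
    exact Lw1 hπ h1 (Lw1 hπ h1 h' le_rfl : π ^ k ∣ t 1 * z) le_rfl
  by_cases hc2 : π ∣ t 2
  · -- Case II
    have h01 : π ∣ t 0 * t 1 := by
      have e : t 0 * t 1 = -(t 2 ^ 2 - D * t 3 ^ 2 - t 0 * t 1) + t 2 ^ 2 - D * t 3 ^ 2 := by ring
      rw [e]
      refine dvd_sub (dvd_add (dvd_neg.mpr ((dvd_pow_self π (by omega : 8*l+1 ≠ 0)).trans hQ1)) ?_) ?_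
      · exact dvd_pow hc2 two_ne_zero
      · rw [hD']; exact Dvd.dvd.mul_right (dvd_mul_right π D') _
    have h0 : π ∣ t 0 := by
      by_contra h0
      have h1 : π ∣ t 1 := (hπ.dvd_mul.mp h01).resolve_left h0
      have : π ∣ t 0 ^ 2 := by
        have e : t 0 ^ 2 = -(A * B * t 1 ^ 2 - t 0 ^ 2) + A * B * t 1 ^ 2 := by ring
        rw [e]
        exact dvd_add (dvd_neg.mpr ((dvd_pow_self π (by omega : 4*l+1 ≠ 0)).trans F1))
          (Dvd.dvd.mul_left (dvd_pow h1 two_ne_zero) _)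
      exact h0 (hπ.dvd_of_dvd_pow this)
    by_cases hc3 : π ∣ t 3
    · by_cases hc4 : π ∣ t 4
      · -- Case II.d : t1 is the unit
        have ht1 : ¬ π ∣ t 1 := by
          obtain ⟨i, hi⟩ := hprim
          fin_cases i
          · exact absurd h0 hi
          · exact hi
          · exact absurd hc2 hi
          · exact absurd hc3 hi
          · exact absurd hc4 hi
        have hABfalse : ¬ π ^ (2*l+2) ∣ A * B := by
          intro h
          exact hB ((pow_dvd_pow π (by omega)).trans
            (Lw hπ (s := l+1) hA h (by omega) : π ^ (l+1) ∣ B))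
        have ht0ne : t 0 ≠ 0 := by
          rintro h00
          apply hABfalse
          have h' : π ^ (4*l+1) ∣ A * B * t 1 ^ 2 := by
            have := F1; rw [h00] at this; simpa using this
          exact (pow_dvd_pow π (by omega)).trans (cant1 _ _ ht1 h')
        obtain ⟨a, u, hu, ht0e⟩ := extract hπ
          (by rw [hπdef, Int.natAbs_natCast]; exact hp.two_le) (t 0).natAbs (t 0) le_rfl ht0ne
        have hat0 : π ^ a ∣ t 0 := ht0e ▸ dvd_mul_right _ _
        have ha_le : a ≤ l := by
          by_contra hcc
          push_neg at hcc
          have h1 : π ^ (l+1) ∣ t 0 := (pow_dvd_pow π (by omega)).trans hat0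
          have h2 : π ^ (2*l+2) ∣ t 0 ^ 2 := by
            calc π ^ (2*l+2) = π ^ (l+1) * π ^ (l+1) := by rw [← pow_add]; congr 1; omega
            _ ∣ t 0 * t 0 := mul_dvd_mul h1 h1
            _ = t 0 ^ 2 := by ring
          apply hABfalse
          have h3 : π ^ (2*l+2) ∣ A * B * t 1 ^ 2 := by
            have e : A * B * t 1 ^ 2 = (A * B * t 1 ^ 2 - t 0 ^ 2) + t 0 ^ 2 := by ring
            rw [e]
            exact dvd_add ((pow_dvd_pow π (by omega)).trans F1) h2
          exact cant1 _ _ ht1 h3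
        by_cases hbt2 : π ^ (a+1) ∣ t 2
        · -- branch (ii) : t2 has valuation > a
          have hnt01 : ¬ π ^ (a+1) ∣ t 0 * t 1 := by
            intro h
            have h' : π ^ (a+1) ∣ π ^ a * (u * t 1) := by
              calc π ^ (a+1) ∣ t 0 * t 1 := h
              _ = π ^ a * (u * t 1) := by rw [ht0e]; ring
            rw [pow_succ] at h'
            have h'' := (mul_dvd_mul_iff_left (pow_ne_zero a hπ0)).mp h'
            rcases hπ.dvd_mul.mp h'' with h3 | h3
            · exact hu h3
            · exact ht1 h3
          have hnd : ¬ π ^ (a+1) ∣ D * t 3 ^ 2 := by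
            intro h
            apply hnt01
            have e : t 0 * t 1 = t 2 ^ 2 - D * t 3 ^ 2 - (t 2 ^ 2 - D * t 3 ^ 2 - t 0 * t 1) := by
              ring
            rw [e]
            refine dvd_sub (dvd_sub ?_ h) ((pow_dvd_pow π (by omega)).trans hQ1)
            calc π ^ (a+1) ∣ t 2 := hbt2
            _ ∣ t 2 ^ 2 := dvd_pow_self _ two_ne_zero
          have hnd3 : ¬ π ^ a ∣ t 3 ^ 2 := by
            intro h
            apply hnd
            calc π ^ (a+1) = π * π ^ a := by rw [pow_succ']
            _ ∣ π * (D' * t 3 ^ 2) := mul_dvd_mul_left π (Dvd.dvd.mul_left h D')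
            _ = D * t 3 ^ 2 := by rw [hD']; ring
          have ht3ne : t 3 ≠ 0 := by
            rintro h33
            exact hnd3 (by rw [h33]; simp)
          obtain ⟨d, v, hv, ht3e⟩ := extract hπ
            (by rw [hπdef, Int.natAbs_natCast]; exact hp.two_le) (t 3).natAbs (t 3) le_rfl ht3ne
          have hda : 2*d < a := by
            by_contra hcc
            push_neg at hcc
            apply hnd3
            calc π ^ a ∣ π ^ (2*d) := pow_dvd_pow π hcc
            _ ∣ π ^ (2*d) * v ^ 2 := dvd_mul_right _ _
            _ = t 3 ^ 2 := by rw [ht3e]; ring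
          have hnd1 : ¬ π ^ (d+1) ∣ t 3 := ht3e ▸ not_pow_succ_dvd hπ d hv
          have hs1 : π ^ (2*l+1) ∣ 2 * t 0 + (A + B) * t 1 :=
            Lw hπ (s := d+1) hnd1 F3 (by omega)
          have hs2 : π ^ (2*l+1) ∣ (A + B) * t 0 + 2 * A * B * t 1 :=
            Lw hπ (s := d+1) hnd1 F6 (by omega)
          have hABt1 : π ^ (2*l+1) ∣ t 1 * (A - B) ^ 2 := by
            have e : t 1 * (A - B) ^ 2 =
                (A + B) * (2 * t 0 + (A + B) * t 1) - 2 * ((A + B) * t 0 + 2 * A * B * t 1) := by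
              ring
            rw [e]
            exact dvd_sub (hs1.mul_left _) (hs2.mul_left _)
          have hAB2 : π ^ (2*l+1) ∣ (A - B) ^ 2 := Lw1 hπ ht1 hABt1 le_rfl
          exact sqcan _ hAB hAB2
        · -- branch (i) : t2 has valuation ≤ a
          have hu' : π ^ (4*l+1-a) ∣ 2 * t 0 + (A + B - 1) * t 1 :=
            Lw hπ (s := a+1) hbt2 F2 (by omega)
          have hfac : π ^ (4*l+1) ∣
              (2 * t 0 + (A + B - 1) * t 1) * ((2 * t 0 + (A + B - 1) * t 1) - 4 * t 0) := by
            have d2 : π ^ a ∣ (2 * t 0 + (A + B - 1) * t 1) - 4 * t 0 :=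
              dvd_sub ((pow_dvd_pow π (by omega)).trans hu') (hat0.mul_left 4)
            calc π ^ (4*l+1) = π ^ (4*l+1-a) * π ^ a := by
                  rw [← pow_add]; congr 1; omega
            _ ∣ _ := mul_dvd_mul hu' d2
          have hGt : π ^ (4*l+1) ∣
              (A ^ 2 - 2 * A * B + B ^ 2 - 2 * A - 2 * B + 1) * t 1 ^ 2 := by
            have e : (A ^ 2 - 2 * A * B + B ^ 2 - 2 * A - 2 * B + 1) * t 1 ^ 2 =
                (2 * t 0 + (A + B - 1) * t 1) * ((2 * t 0 + (A + B - 1) * t 1) - 4 * t 0)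
                - 4 * (A * B * t 1 ^ 2 - t 0 ^ 2) := by ring
            rw [e]
            exact dvd_sub hfac (F1.mul_left 4)
          exact hG ((pow_dvd_pow π (by omega)).trans (cant1 _ _ ht1 hGt))
      · -- Case II.b : t4 is a unit
        have ht1 : π ^ (4*l) ∣ t 1 := Lw1 hπ hc4 (by rwa [mul_comm (t 1) (t 4)] at F4) le_rfl
        have ht0 : π ^ (4*l) ∣ t 0 := Lw1 hπ hc4 (by rwa [mul_comm (t 0) (t 4)] at F7) le_rfl
        have h1' : π ∣ t 1 := (dvd_pow_self π (by omega : 4*l ≠ 0)).trans ht1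
        have h0' : π ∣ t 0 := (dvd_pow_self π (by omega : 4*l ≠ 0)).trans ht0
        have h2d : π ^ 2 ∣ D * t 4 ^ 2 := by
          have e : D * t 4 ^ 2 = t 2 ^ 2 - (t 0 + A * t 1) * (t 0 + B * t 1)
              - (t 2 ^ 2 - D * t 4 ^ 2 - (t 0 + A * t 1) * (t 0 + B * t 1)) := by ring
          rw [e]
          refine dvd_sub (dvd_sub ?_ ?_) ((pow_dvd_pow π (by omega)).trans hQ2)
          · calc π ^ 2 = π * π := by rw [pow_two]
            _ ∣ t 2 * t 2 := mul_dvd_mul hc2 hc2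
            _ = t 2 ^ 2 := by ring
          · calc π ^ 2 = π * π := by rw [pow_two]
            _ ∣ (t 0 + A * t 1) * (t 0 + B * t 1) :=
                mul_dvd_mul (dvd_add h0' (h1'.mul_left A)) (dvd_add h0' (h1'.mul_left B))
        have h44 : π ∣ t 4 ^ 2 := by
          have h' : π * π ∣ π * (D' * t 4 ^ 2) := by
            calc π * π = π ^ 2 := by rw [pow_two]
            _ ∣ D * t 4 ^ 2 := h2d
            _ = π * (D' * t 4 ^ 2) := by rw [hD']; ring
          have h'' := (mul_dvd_mul_iff_left hπ0).mp h'
          exact ((hπ.dvd_mul).mp h'').resolve_left hD'p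
        exact hc4 (hπ.dvd_of_dvd_pow h44)
    · -- Case II.a : t3 is a unit
      have hs1 : π ^ (4*l) ∣ 2 * t 0 + (A + B) * t 1 := Lw1 hπ hc3 F3 le_rfl
      have hs2 : π ^ (4*l) ∣ (A + B) * t 0 + 2 * A * B * t 1 := Lw1 hπ hc3 F6 le_rfl
      have hABt1 : π ^ (4*l) ∣ (A - B) ^ 2 * t 1 := by
        have e : (A - B) ^ 2 * t 1 =
            (A + B) * (2 * t 0 + (A + B) * t 1) - 2 * ((A + B) * t 0 + 2 * A * B * t 1) := by
          ring
        rw [e]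
        exact dvd_sub (hs1.mul_left _) (hs2.mul_left _)
      have hAB2 : ¬ π ^ (2*l+1) ∣ (A - B) ^ 2 := sqcan _ hAB
      have ht1 : π ^ 2 ∣ t 1 := Lw hπ (s := 2*l+1) hAB2 hABt1 (by omega)
      have h2d : π ^ 2 ∣ D * t 3 ^ 2 := by
        have e : D * t 3 ^ 2 = t 2 ^ 2 - t 0 * t 1
            - (t 2 ^ 2 - D * t 3 ^ 2 - t 0 * t 1) := by ring
        rw [e]
        refine dvd_sub (dvd_sub ?_ (ht1.mul_left _)) ((pow_dvd_pow π (by omega)).trans hQ1)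
        calc π ^ 2 = π * π := by rw [pow_two]
        _ ∣ t 2 * t 2 := mul_dvd_mul hc2 hc2
        _ = t 2 ^ 2 := by ring
      have h33 : π ∣ t 3 ^ 2 := by
        have h' : π * π ∣ π * (D' * t 3 ^ 2) := by
          calc π * π = π ^ 2 := by rw [pow_two]
          _ ∣ D * t 3 ^ 2 := h2d
          _ = π * (D' * t 3 ^ 2) := by rw [hD']; ring
        have h'' := (mul_dvd_mul_iff_left hπ0).mp h'
        exact ((hπ.dvd_mul).mp h'').resolve_left hD'p
      exact hc3 (hπ.dvd_of_dvd_pow h33)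
  · -- Case I : t2 is a unit
    have ht1 : ¬ π ∣ t 1 := by
      intro h
      apply hc2
      apply hπ.dvd_of_dvd_pow (n := 2)
      have e : t 2 ^ 2 = (t 2 ^ 2 - D * t 3 ^ 2 - t 0 * t 1) + D * t 3 ^ 2 + t 0 * t 1 := by ring
      rw [e]
      refine dvd_add (dvd_add ((dvd_pow_self π (by omega : 8*l+1 ≠ 0)).trans hQ1) ?_)
        (Dvd.dvd.mul_left h _)
      rw [hD']; exact Dvd.dvd.mul_right (dvd_mul_right π D') _
    have hu' : π ^ (4*l+1) ∣ 2 * t 0 + (A + B - 1) * t 1 := Lw1 hπ hc2 F2 le_rfl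
    have hGt : π ^ (4*l+1) ∣
        (A ^ 2 - 2 * A * B + B ^ 2 - 2 * A - 2 * B + 1) * t 1 ^ 2 := by
      have e : (A ^ 2 - 2 * A * B + B ^ 2 - 2 * A - 2 * B + 1) * t 1 ^ 2 =
          (2 * t 0 + (A + B - 1) * t 1) * ((2 * t 0 + (A + B - 1) * t 1) - 4 * t 0)
          - 4 * (A * B * t 1 ^ 2 - t 0 ^ 2) := by ring
      rw [e]
      exact dvd_sub (hu'.mul_right _) (F1.mul_left 4)
    exact hG ((pow_dvd_pow π (by omega)).trans (cant1 _ _ ht1 hGt))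
end

section
/- Let D be an integer that is not a perfect square, and let p ≠ 2 be a prime with p ∤ D (so p is unramified in ℚ(√D)). Let A, B be integers with A·B ≠ 0, A ≠ B and G(A,B) ≠ 0. Then there exist a nonzero vector t = (t0,…,t4) ∈ ℚ_p⁵ with Q1(t) = Q2(t) = 0, elements u ∈ {t0, t1} and v ∈ {t0 + A·t1, t0 + B·t1} with u·v ≠ 0, and x, y ∈ ℚ_p such that u·v = x² − D·y². (Equivalently: there is a point of S^(D;A,B)(ℚ_p) at which the Brauer class α evaluates to 0.) -/
section Aux

variable {p : ℕ} [Fact p.Prime]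

private lemma toZMod_ne_zero_iff' (z : ℤ_[p]) : PadicInt.toZMod z ≠ 0 ↔ IsUnit z := by
  have hker : z ∈ RingHom.ker (PadicInt.toZMod (p := p)) ↔ ¬IsUnit z := by
    rw [PadicInt.ker_toZMod]
    simp [IsLocalRing.mem_maximalIdeal, mem_nonunits_iff]
  rw [RingHom.mem_ker] at hker
  constructor
  · intro h; by_contra hu; exact h (hker.mpr hu)
  · intro h hz; exact (hker.mp hz) h

private lemma two_ne_zero_zmod (hp2 : p ≠ 2) : (2 : ZMod p) ≠ 0 := by
  intro hc
  have h1 : ((2 : ℕ) : ZMod p) = 0 := by exact_mod_cast hc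
  have h2 := (ZMod.natCast_eq_zero_iff 2 p).mp h1
  rcases (Nat.prime_two.eq_one_or_self_of_dvd p h2) with h | h
  · exact Nat.Prime.ne_one (Fact.out) h
  · exact hp2 h

private lemma padic_sqrt (hp2 : p ≠ 2) (u : ℤ_[p]) (τ : ZMod p) (hτ : τ ≠ 0)
    (h : PadicInt.toZMod u = τ * τ) : ∃ s : ℤ_[p], s ^ 2 = u ∧ PadicInt.toZMod s ≠ 0 := by
  classical
  set a : ℤ_[p] := ((τ.val : ℕ) : ℤ_[p]) with ha
  have hta : PadicInt.toZMod a = τ := by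
    rw [ha, map_natCast, ZMod.natCast_val, ZMod.cast_id]
  set F : Polynomial ℤ_[p] := Polynomial.X ^ 2 - Polynomial.C u with hF
  have hFeval : ∀ z : ℤ_[p], F.eval z = z ^ 2 - u := by intro z; simp [hF]
  have hFdeval : F.derivative.eval a = 2 * a := by
    rw [hF]; simp [Polynomial.derivative_X_pow]
    exact Or.inl one_add_one_eq_two
  have hunit : IsUnit (2 * a) := by
    rw [← toZMod_ne_zero_iff', map_mul, hta]
    have h2 : PadicInt.toZMod (2 : ℤ_[p]) = (2 : ZMod p) := by
      rw [show ((2 : ℤ_[p])) = ((2 : ℕ) : ℤ_[p]) by norm_num, map_natCast]; norm_num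
    rw [h2]
    exact mul_ne_zero (two_ne_zero_zmod hp2) hτ
  have hnd : ‖F.derivative.eval a‖ = 1 := by
    rw [hFdeval]; exact PadicInt.isUnit_iff.mp hunit
  have hlt : ‖F.eval a‖ < 1 := by
    have hker : PadicInt.toZMod (F.eval a) = 0 := by
      rw [hFeval, map_sub, map_pow, hta, h]; ring
    have hnu : ¬ IsUnit (F.eval a) := by
      rw [← toZMod_ne_zero_iff']; simp [hker]
    exact PadicInt.not_isUnit_iff.mp hnu
  have hnorm : ‖F.eval a‖ < ‖F.derivative.eval a‖ ^ 2 := by rw [hnd]; simpa using hlt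
  obtain ⟨z, hz, -, -, -⟩ := hensels_lemma hnorm
  rw [Polynomial.coe_aeval_eq_eval] at hz
  rw [hFeval] at hz
  have hz2 : z ^ 2 = u := by linear_combination hz
  refine ⟨z, hz2, ?_⟩
  rw [toZMod_ne_zero_iff']
  have huu : IsUnit u := by rw [← toZMod_ne_zero_iff', h]; exact mul_ne_zero hτ hτ
  rw [← hz2, sq] at huu
  exact isUnit_of_mul_isUnit_left huu

open Finset in
private lemma vb_card (hp2 : p ≠ 2) (γ : ZMod p) (hγ : γ ≠ 0) :
    2 * (Finset.univ.filter (fun ξ : ZMod p => ∃ s, s ≠ 0 ∧ ξ^2 - γ = s^2)).card ≤ p - 1 := by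
  classical
  set V := Finset.univ.filter (fun ξ : ZMod p => ∃ s, s ≠ 0 ∧ ξ^2 - γ = s^2) with hV
  set f : ZMod p × Bool → ZMod p := fun w =>
    if h : ∃ s, s ≠ 0 ∧ w.1^2 - γ = s^2 then (if w.2 then w.1 + h.choose else w.1 - h.choose)
    else 0 with hf
  have key : ∀ ξ : ZMod p, ∀ h : (∃ s, s ≠ 0 ∧ ξ^2 - γ = s^2),
      (ξ + h.choose) * (ξ - h.choose) = γ := by
    intro ξ h
    have hs := h.choose_spec.2
    linear_combination hs
  have h2 : (2 : ZMod p) ≠ 0 := two_ne_zero_zmod hp2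
  have hne : ∀ ξ : ZMod p, ∀ h : (∃ s, s ≠ 0 ∧ ξ^2 - γ = s^2),
      (ξ + h.choose) ≠ 0 ∧ (ξ - h.choose) ≠ 0 := by
    intro ξ h
    have hk := key ξ h
    constructor <;> intro hc <;> rw [hc] at hk <;> exact hγ (by rw [← hk]; ring)
  have main : ∀ (ξ₀ : ZMod p) (h₀ : ∃ s, s ≠ 0 ∧ ξ₀^2 - γ = s^2) (b₀ : Bool),
      (if b₀ then ξ₀ + h₀.choose else ξ₀ - h₀.choose) * (2 * ξ₀) =
        (if b₀ then ξ₀ + h₀.choose else ξ₀ - h₀.choose)^2 + γ := by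
    intro ξ₀ h₀ b₀
    have hk := key ξ₀ h₀
    cases b₀ <;> simp only [if_true, Bool.false_eq_true, if_false] <;> linear_combination hk
  have hmaps : ∀ w ∈ V ×ˢ (Finset.univ : Finset Bool), f w ∈ Finset.univ.erase (0 : ZMod p) := by
    rintro ⟨ξ, b⟩ hw
    simp only [mem_product, hV, mem_filter] at hw
    obtain ⟨⟨-, h⟩, -⟩ := hw
    obtain ⟨hne1, hne2⟩ := hne ξ h
    simp only [hf, dif_pos h]
    cases b <;> simp [hne1, hne2]
  have hinj : Set.InjOn f ((V ×ˢ (Finset.univ : Finset Bool)) : Finset (ZMod p × Bool)) := by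
    rintro ⟨ξ, b⟩ hw ⟨ξ', b'⟩ hw' heq
    simp only [Finset.coe_product, Set.mem_prod, mem_coe, hV, mem_filter] at hw hw'
    obtain ⟨⟨-, h⟩, -⟩ := hw
    obtain ⟨⟨-, h'⟩, -⟩ := hw'
    simp only [hf] at heq
    rw [dif_pos h, dif_pos h'] at heq
    have e1 := main ξ h b
    have e2 := main ξ' h' b'
    rw [heq] at e1
    have hu0 : (if b' then ξ' + h'.choose else ξ' - h'.choose) ≠ 0 := by
      obtain ⟨hne1, hne2⟩ := hne ξ' h'
      cases b' <;> simp only [if_true, Bool.false_eq_true, if_false] <;> assumption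
    have hxx : ξ = ξ' := by
      have h3 : (if b' then ξ' + h'.choose else ξ' - h'.choose) * (2 * ξ) =
          (if b' then ξ' + h'.choose else ξ' - h'.choose) * (2 * ξ') := by
        rw [e1, e2]
      exact mul_left_cancel₀ h2 (mul_left_cancel₀ hu0 h3)
    subst hxx
    have hchoose : h'.choose = h.choose := rfl
    have hbb : b = b' := by
      cases b <;> cases b' <;> simp only [if_true, Bool.false_eq_true, if_false] at heq <;>
        first
          | rfl
          | (exfalso
             apply h.choose_spec.1
             rw [hchoose] at heq
             have h2s : (2 : ZMod p) * h.choose = 0 := by linear_combination heq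
             rcases mul_eq_zero.mp h2s with hc | hc
             · exact absurd hc h2
             · exact hc)
          | (exfalso
             apply h.choose_spec.1
             rw [hchoose] at heq
             have h2s : (2 : ZMod p) * h.choose = 0 := by linear_combination -heq
             rcases mul_eq_zero.mp h2s with hc | hc
             · exact absurd hc h2
             · exact hc)
    rw [hbb]
  have hcard := Finset.card_le_card_of_injOn f hmaps hinj
  rw [Finset.card_product] at hcard
  have hbool : (Finset.univ : Finset Bool).card = 2 := by simp
  have herase : (Finset.univ.erase (0 : ZMod p)).card = p - 1 := by
    rw [Finset.card_erase_of_mem (Finset.mem_univ _), Finset.card_univ, ZMod.card]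
  rw [hbool, herase] at hcard
  omega

private lemma nonsq_mul (a b : ZMod p) (ha : ¬IsSquare a) (hb : ¬IsSquare b) :
    IsSquare (a * b) := by
  have ha0 : a ≠ 0 := by rintro rfl; exact ha (by simp)
  have hb0 : b ≠ 0 := by rintro rfl; exact hb (by simp)
  have h1 : quadraticChar (ZMod p) a = -1 := quadraticChar_neg_one_iff_not_isSquare.mpr ha
  have h2 : quadraticChar (ZMod p) b = -1 := quadraticChar_neg_one_iff_not_isSquare.mpr hb
  have h3 : quadraticChar (ZMod p) (a * b) = 1 := by rw [map_mul, h1, h2]; ring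
  exact (quadraticChar_one_iff_isSquare (mul_ne_zero ha0 hb0)).mp h3

private lemma pred_of_not_bad (d w : ZMod p) (hd : ¬IsSquare d)
    (hw : ¬∃ s, s ≠ 0 ∧ w = s^2) : IsSquare (w * d⁻¹) := by
  by_cases hw0 : w = 0
  · simp [hw0]
  · have hnsw : ¬IsSquare w := by
      rintro ⟨s, rfl⟩
      exact hw ⟨s, fun hs => hw0 (by simp [hs]), (sq s).symm⟩
    have hdi : ¬IsSquare d⁻¹ := by
      rintro ⟨r, hr⟩
      apply hd
      refine ⟨r⁻¹, ?_⟩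
      rw [← mul_inv, ← hr, inv_inv]
    exact nonsq_mul _ _ hnsw hdi

private lemma exists_outside (s : Finset (ZMod p)) (h : s.card < p) : ∃ ξ : ZMod p, ξ ∉ s := by
  by_contra hc
  push_neg at hc
  have hsub : (Finset.univ : Finset (ZMod p)) ⊆ s := fun x _ => hc x
  have := Finset.card_le_card hsub
  rw [Finset.card_univ, ZMod.card] at this
  omega

private lemma exists_xi (hp2 : p ≠ 2) (hp5 : 5 ≤ p) (d γ γ' : ZMod p) (hd : ¬IsSquare d)
    (hγ : γ ≠ 0) (hγ' : γ' ≠ 0) :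
    ∃ ξ : ZMod p, IsSquare ((ξ^2 - γ) * d⁻¹) ∧ IsSquare ((ξ^2 - γ') * d⁻¹) ∧
      ¬(ξ^2 - γ = 0 ∧ ξ^2 - γ' = 0) := by
  classical
  set V := Finset.univ.filter (fun ξ : ZMod p => ∃ s, s ≠ 0 ∧ ξ^2 - γ = s^2) with hV
  set V' := Finset.univ.filter (fun ξ : ZMod p => ∃ s, s ≠ 0 ∧ ξ^2 - γ' = s^2) with hV'
  have hVc := vb_card hp2 γ hγ
  have hVc' := vb_card hp2 γ' hγ'
  rw [← hV] at hVc
  rw [← hV'] at hVc'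
  by_cases hgg : γ = γ'
  · subst hgg
    set W := Finset.univ.filter (fun ξ : ZMod p => ξ^2 - γ = 0) with hW
    have hWcard : W.card ≤ 2 := by
      by_cases hne : W.Nonempty
      · obtain ⟨ξ₀, hξ₀⟩ := hne
        rw [hW, Finset.mem_filter] at hξ₀
        have hsub : W ⊆ {ξ₀, -ξ₀} := by
          intro ξ hξ
          rw [hW, Finset.mem_filter] at hξ
          have : (ξ - ξ₀) * (ξ + ξ₀) = 0 := by linear_combination hξ.2 - hξ₀.2
          rcases mul_eq_zero.mp this with h | h
          · simp [sub_eq_zero.mp h]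
          · have : ξ = -ξ₀ := by linear_combination h
            simp [this]
        calc W.card ≤ ({ξ₀, -ξ₀} : Finset (ZMod p)).card := Finset.card_le_card hsub
          _ ≤ 2 := Finset.card_insert_le _ _ |>.trans (by simp)
      · rw [Finset.not_nonempty_iff_eq_empty] at hne
        simp [hne]
    have hcard : (V ∪ W).card < p := by
      have := Finset.card_union_le V W
      omega
    obtain ⟨ξ, hξ⟩ := exists_outside _ hcard
    rw [Finset.mem_union] at hξ
    push_neg at hξ
    obtain ⟨h1, h2⟩ := hξ
    rw [hV, Finset.mem_filter] at h1
    rw [hW, Finset.mem_filter] at h2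
    have hz : ξ^2 - γ ≠ 0 := fun h => h2 ⟨Finset.mem_univ ξ, h⟩
    have hpred := pred_of_not_bad d _ hd (fun h => h1 ⟨Finset.mem_univ ξ, h⟩)
    exact ⟨ξ, hpred, hpred, fun h => hz h.1⟩
  · have hcard : (V ∪ V').card < p := by
      have := Finset.card_union_le V V'
      omega
    obtain ⟨ξ, hξ⟩ := exists_outside _ hcard
    rw [Finset.mem_union] at hξ
    push_neg at hξ
    obtain ⟨h1, h2⟩ := hξ
    rw [hV, Finset.mem_filter] at h1
    rw [hV', Finset.mem_filter] at h2
    refine ⟨ξ, pred_of_not_bad d _ hd (fun h => h1 ⟨Finset.mem_univ ξ, h⟩),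
      pred_of_not_bad d _ hd (fun h => h2 ⟨Finset.mem_univ ξ, h⟩), ?_⟩
    rintro ⟨hz1, hz2⟩
    exact hgg (by linear_combination hz2 - hz1)

private lemma solve_norm (hp2 : p ≠ 2) (D0 : ℤ_[p]) (hD0 : PadicInt.toZMod D0 ≠ 0)
    (c : ℤ_[p]) (x : ℤ_[p])
    (hz : (PadicInt.toZMod x)^2 - PadicInt.toZMod c ≠ 0)
    (hsq : IsSquare (((PadicInt.toZMod x)^2 - PadicInt.toZMod c) * (PadicInt.toZMod D0)⁻¹)) :
    ∃ y : ℤ_[p], x^2 - D0 * y^2 = c := by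
  obtain ⟨dU, hdU⟩ := (toZMod_ne_zero_iff' D0).mp hD0
  set dInv : ℤ_[p] := ((dU⁻¹ : ℤ_[p]ˣ) : ℤ_[p]) with hdInv
  have hmul : D0 * dInv = 1 := by rw [← hdU, hdInv]; exact_mod_cast dU.mul_inv
  have htInv : PadicInt.toZMod dInv = (PadicInt.toZMod D0)⁻¹ := by
    have h1 : PadicInt.toZMod D0 * PadicInt.toZMod dInv = 1 := by
      rw [← map_mul, hmul, map_one]
    exact (inv_eq_of_mul_eq_one_right h1).symm
  set w : ℤ_[p] := (x^2 - c) * dInv with hw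
  have htw : PadicInt.toZMod w = ((PadicInt.toZMod x)^2 - PadicInt.toZMod c) *
      (PadicInt.toZMod D0)⁻¹ := by
    rw [hw, map_mul, map_sub, map_pow, htInv]
  have htw0 : PadicInt.toZMod w ≠ 0 := by
    rw [htw]
    exact mul_ne_zero hz (inv_ne_zero hD0)
  obtain ⟨τ, hτ⟩ := hsq
  have hτ0 : τ ≠ 0 := by
    rintro rfl
    rw [mul_zero] at hτ
    exact htw0 (by rw [htw, hτ])
  obtain ⟨y, hy2, -⟩ := padic_sqrt hp2 w τ hτ0 (by rw [htw, hτ])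
  refine ⟨y, ?_⟩
  rw [hy2, hw]
  calc x^2 - D0 * ((x^2 - c) * dInv) = x^2 - (D0 * dInv) * (x^2 - c) := by ring
    _ = c := by rw [hmul]; ring

private lemma sqrt_exact (hp2 : p ≠ 2) (c : ℤ_[p]) (ξ : ZMod p)
    (hc : PadicInt.toZMod c = ξ^2) (hξ : ξ ≠ 0) :
    ∃ x : ℤ_[p], x^2 = c ∧ (PadicInt.toZMod x)^2 = PadicInt.toZMod c := by
  obtain ⟨x, hx2, -⟩ := padic_sqrt hp2 c ξ hξ (by rw [hc, sq])
  exact ⟨x, hx2, by rw [← map_pow, hx2]⟩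

private lemma lift_toZMod (ξ : ZMod p) : PadicInt.toZMod ((ξ.val : ℕ) : ℤ_[p]) = ξ := by
  rw [map_natCast, ZMod.natCast_val, ZMod.cast_id]

end Aux

theorem stmt_4 (D A B : ℤ) (p : ℕ) [Fact p.Prime] (hp2 : p ≠ 2)
    (hD : ¬ IsSquare D) (hpD : ¬ ((p : ℤ) ∣ D))
    (hAB : A * B ≠ 0) (hABne : A ≠ B)
    (hG : A ^ 2 - 2 * A * B + B ^ 2 - 2 * A - 2 * B + 1 ≠ 0) :
    ∃ t : Fin 5 → ℚ_[p], t ≠ 0 ∧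
      (t 2) ^ 2 - (D : ℚ_[p]) * (t 3) ^ 2 - t 0 * t 1 = 0 ∧
      (t 2) ^ 2 - (D : ℚ_[p]) * (t 4) ^ 2 -
        (t 0 + (A : ℚ_[p]) * t 1) * (t 0 + (B : ℚ_[p]) * t 1) = 0 ∧
      ∃ u v : ℚ_[p],
        (u = t 0 ∨ u = t 1) ∧
        (v = t 0 + (A : ℚ_[p]) * t 1 ∨ v = t 0 + (B : ℚ_[p]) * t 1) ∧
        u * v ≠ 0 ∧
        ∃ x y : ℚ_[p], u * v = x ^ 2 - (D : ℚ_[p]) * y ^ 2 := by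
  classical
  have hDbar : ((D : ZMod p)) ≠ 0 := by
    intro h; exact hpD ((ZMod.intCast_zmod_eq_zero_iff_dvd D p).mp h)
  have htD : PadicInt.toZMod ((D : ℤ_[p])) = ((D : ZMod p)) := map_intCast _ D
  by_cases hsqD : IsSquare ((D : ZMod p))
  · -- Case 1 : D is a square mod p
    obtain ⟨τ, hτ⟩ := hsqD
    have hτ0 : τ ≠ 0 := by rintro rfl; rw [mul_zero] at hτ; exact hDbar hτ
    obtain ⟨s, hs2, hs0⟩ := padic_sqrt hp2 ((D : ℤ_[p])) τ hτ0 (by rw [htD, hτ])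
    have hsne : ((s : ℚ_[p])) ≠ 0 := by
      rw [PadicInt.coe_ne_zero]
      intro h
      exact hs0 (by rw [h, map_zero])
    have hsD : ((s : ℚ_[p]))^2 = (D : ℚ_[p]) := by
      exact_mod_cast congrArg (fun z : ℤ_[p] => (z : ℚ_[p])) hs2
    refine ⟨![1, 0, 1, (s : ℚ_[p])⁻¹, 0], ?_, ?_, ?_, ?_⟩
    · intro hc
      have := congrFun hc 0
      simp at this
    · show (1:ℚ_[p])^2 - (D : ℚ_[p]) * ((s : ℚ_[p])⁻¹)^2 - 1 * 0 = 0
      rw [← hsD]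
      field_simp
      ring
    · show (1:ℚ_[p])^2 - (D : ℚ_[p]) * (0:ℚ_[p])^2 -
        (1 + (A : ℚ_[p]) * 0) * (1 + (B : ℚ_[p]) * 0) = 0
      ring
    · refine ⟨1, 1, Or.inl (by simp), Or.inl (by simp), by simp, 1, 0, by push_cast; ring⟩
  · by_cases hsqD' : IsSquare (-(D : ZMod p))
    · -- Case 2 : -D is a square mod p (route I)
      set W : ℤ := 1 + (A + B - 1) * (p:ℤ)^2 + A * B * (p:ℤ)^4 with hWdef
      have htw : PadicInt.toZMod ((W : ℤ_[p])) = 1 := by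
        rw [map_intCast, hWdef]
        push_cast [ZMod.natCast_self]
        ring
      obtain ⟨r, hr⟩ := hsqD'
      have hr0 : r ≠ 0 := by
        rintro rfl
        rw [mul_zero] at hr
        exact hDbar (neg_eq_zero.mp hr)
      have hsq0 : IsSquare (((PadicInt.toZMod (0:ℤ_[p]))^2 -
          PadicInt.toZMod ((W : ℤ_[p]))) * (PadicInt.toZMod ((D : ℤ_[p])))⁻¹) := by
        rw [htw, htD, map_zero]
        refine ⟨r * ((D : ZMod p))⁻¹, ?_⟩
        have hDD : (D : ZMod p) * ((D : ZMod p))⁻¹ = 1 := mul_inv_cancel₀ hDbar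
        linear_combination (((D : ZMod p))⁻¹ * ((D : ZMod p))⁻¹) * hr +
          ((D : ZMod p))⁻¹ * hDD
      have hz0 : (PadicInt.toZMod (0:ℤ_[p]))^2 - PadicInt.toZMod ((W : ℤ_[p])) ≠ 0 := by
        rw [htw, map_zero]
        intro h
        have : (1 : ZMod p) = 0 := by linear_combination -h
        simp at this
      obtain ⟨t4, ht4⟩ := solve_norm hp2 ((D : ℤ_[p])) (by rw [htD]; exact hDbar)
        ((W : ℤ_[p])) 0 hz0 hsq0
      -- ht4 : 0^2 - D * t4^2 = W
      have ht4Q : (0:ℚ_[p])^2 - (D : ℚ_[p]) * ((t4 : ℚ_[p]))^2 = (W : ℚ_[p]) := by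
        exact_mod_cast congrArg (fun z : ℤ_[p] => (z : ℚ_[p])) ht4
      -- the square root of 1 + A p^2 for the u*v part
      have htw2 : PadicInt.toZMod ((1 + A * (p:ℤ)^2 : ℤ) : ℤ_[p]) = 1 * 1 := by
        rw [map_intCast]
        push_cast [ZMod.natCast_self]
        ring
      obtain ⟨xx, hxx2, -⟩ := padic_sqrt hp2 (((1 + A * (p:ℤ)^2 : ℤ) : ℤ_[p])) 1
        one_ne_zero htw2
      have hxxQ : ((xx : ℚ_[p]))^2 = ((1 + A * (p:ℤ)^2 : ℤ) : ℚ_[p]) := by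
        exact_mod_cast congrArg (fun z : ℤ_[p] => (z : ℚ_[p])) hxx2
      have hpQ : ((p:ℚ_[p])) ≠ 0 := by
        exact_mod_cast (Nat.cast_ne_zero (R := ℚ_[p])).mpr (Fact.out : p.Prime).ne_zero
      refine ⟨![1, (p:ℚ_[p])^2, (p:ℚ_[p]), 0, (t4 : ℚ_[p])], ?_, ?_, ?_, ?_⟩
      · intro hc
        have := congrFun hc 0
        simp at this
      · show ((p:ℚ_[p]))^2 - (D : ℚ_[p]) * (0:ℚ_[p])^2 - 1 * ((p:ℚ_[p]))^2 = 0
        ring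
      · show ((p:ℚ_[p]))^2 - (D : ℚ_[p]) * ((t4 : ℚ_[p]))^2 -
          (1 + (A : ℚ_[p]) * ((p:ℚ_[p]))^2) * (1 + (B : ℚ_[p]) * ((p:ℚ_[p]))^2) = 0
        have hWQ : ((W : ℤ) : ℚ_[p]) = 1 + ((A:ℚ_[p]) + (B:ℚ_[p]) - 1) * ((p:ℚ_[p]))^2 +
            (A:ℚ_[p]) * (B:ℚ_[p]) * ((p:ℚ_[p]))^4 := by
          rw [hWdef]; push_cast; ring
        rw [hWQ] at ht4Q
        linear_combination ht4Q
      · refine ⟨1, 1 + (A : ℚ_[p]) * ((p:ℚ_[p]))^2, Or.inl (by simp), Or.inl (by simp), ?_,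
          (xx : ℚ_[p]), 0, ?_⟩
        · have h1 : (1 : ℚ_[p]) + (A : ℚ_[p]) * ((p:ℚ_[p]))^2 =
              (((1 + A * (p:ℤ)^2 : ℤ) : ℤ_[p]) : ℚ_[p]) := by push_cast; ring
          rw [one_mul, h1, PadicInt.coe_ne_zero]
          intro hz
          have := congrArg PadicInt.toZMod hz
          rw [htw2, map_zero] at this
          simp at this
        · rw [one_mul, hxxQ]
          push_cast
          ring
    · -- Case 3 : neither D nor -D is a square mod p
      have hsqm1 : IsSquare (-1 : ZMod p) := by
        obtain ⟨r, hr⟩ := nonsq_mul _ _ hsqD' hsqD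
        refine ⟨r * ((D : ZMod p))⁻¹, ?_⟩
        have hDD : (D : ZMod p) * ((D : ZMod p))⁻¹ = 1 := mul_inv_cancel₀ hDbar
        linear_combination (((D : ZMod p))⁻¹ * ((D : ZMod p))⁻¹) * hr +
          ((D : ZMod p) * ((D : ZMod p))⁻¹ + 1) * hDD
      have hp5 : 5 ≤ p := by
        have hmod := ZMod.exists_sq_eq_neg_one_iff.mp hsqm1
        by_contra hlt
        push_neg at hlt
        have hge := (Fact.out : p.Prime).two_le
        interval_cases p
        · exact hp2 rfl
        · exact hmod rfl
        · exact absurd (Fact.out : Nat.Prime 4) (by norm_num)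
      set Abar : ZMod p := ((A : ℤ) : ZMod p) with hAbar
      set Bbar : ZMod p := ((B : ℤ) : ZMod p) with hBbar
      have hbad3 : (({0, -Abar, -Bbar} : Finset (ZMod p))).card < p := by
        have h1 : (({0, -Abar, -Bbar} : Finset (ZMod p))).card ≤ 3 := by
          apply le_trans (Finset.card_insert_le _ _)
          have := Finset.card_insert_le (-Abar) ({-Bbar} : Finset (ZMod p))
          simp only [Finset.card_singleton] at this
          omega
        omega
      obtain ⟨rb, hrb⟩ := exists_outside _ hbad3
      simp only [Finset.mem_insert, Finset.mem_singleton] at hrb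
      push_neg at hrb
      obtain ⟨hr0, hrA', hrB'⟩ := hrb
      have hrA : rb + Abar ≠ 0 := fun h => hrA' (by linear_combination h)
      have hrB : rb + Bbar ≠ 0 := fun h => hrB' (by linear_combination h)
      set r : ℤ_[p] := ((rb.val : ℕ) : ℤ_[p]) with hrdef
      have htr : PadicInt.toZMod r = rb := lift_toZMod rb
      set cZ : ℤ_[p] := r with hcZ
      set cZ' : ℤ_[p] := (r + (A : ℤ_[p])) * (r + (B : ℤ_[p])) with hcZ'
      have htc' : PadicInt.toZMod cZ' = (rb + Abar) * (rb + Bbar) := by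
        rw [hcZ', map_mul, map_add, map_add, htr, map_intCast, map_intCast]
      have hγ' : (rb + Abar) * (rb + Bbar) ≠ 0 := mul_ne_zero hrA hrB
      have hD0 : PadicInt.toZMod ((D : ℤ_[p])) ≠ 0 := by rw [htD]; exact hDbar
      obtain ⟨ξ, hP1, hP2, hnb⟩ := exists_xi hp2 hp5 ((D : ZMod p)) rb
        ((rb + Abar) * (rb + Bbar)) hsqD hr0 hγ'
      -- construct x t3 t4 in ℤ_[p] with x^2 - D t3^2 = cZ and x^2 - D t4^2 = cZ'
      have hmain : ∃ x t3 t4 : ℤ_[p],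
          x^2 - ((D : ℤ_[p])) * t3^2 = cZ ∧ x^2 - ((D : ℤ_[p])) * t4^2 = cZ' := by
        by_cases hz1 : ξ^2 - rb = 0
        · have hz2 : ξ^2 - (rb + Abar) * (rb + Bbar) ≠ 0 := fun h => hnb ⟨hz1, h⟩
          have hξ0 : ξ ≠ 0 := by
            rintro rfl
            exact hr0 (by linear_combination -hz1)
          obtain ⟨x, hx2, hxr⟩ := sqrt_exact hp2 cZ ξ
            (by rw [hcZ, htr]; linear_combination -hz1) hξ0
          have hxz : (PadicInt.toZMod x)^2 - PadicInt.toZMod cZ' ≠ 0 := by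
            rw [hxr, hcZ, htr, htc']
            intro h
            exact hz2 (by linear_combination h + hz1)
          have hxsq : IsSquare (((PadicInt.toZMod x)^2 - PadicInt.toZMod cZ') *
              (PadicInt.toZMod ((D : ℤ_[p])))⁻¹) := by
            rw [hxr, hcZ, htr, htc', htD]
            have hre : rb - (rb + Abar) * (rb + Bbar) =
                ξ^2 - (rb + Abar) * (rb + Bbar) := by linear_combination -hz1
            rw [hre]
            exact hP2
          obtain ⟨t4, ht4⟩ := solve_norm hp2 _ hD0 cZ' x hxz hxsq
          exact ⟨x, 0, t4, by rw [← hx2]; ring, ht4⟩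
        · by_cases hz2 : ξ^2 - (rb + Abar) * (rb + Bbar) = 0
          · have hξ0 : ξ ≠ 0 := by
              rintro rfl
              exact hγ' (by linear_combination -hz2)
            obtain ⟨x, hx2, hxr⟩ := sqrt_exact hp2 cZ' ξ
              (by rw [htc']; linear_combination -hz2) hξ0
            have hxz : (PadicInt.toZMod x)^2 - PadicInt.toZMod cZ ≠ 0 := by
              rw [hxr, hcZ, htr, htc']
              intro h
              exact hz1 (by linear_combination h + hz2)
            have hxsq : IsSquare (((PadicInt.toZMod x)^2 - PadicInt.toZMod cZ) *
                (PadicInt.toZMod ((D : ℤ_[p])))⁻¹) := by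
              rw [hxr, hcZ, htr, htc', htD]
              have hre : (rb + Abar) * (rb + Bbar) - rb = ξ^2 - rb := by
                linear_combination -hz2
              rw [hre]
              exact hP1
            obtain ⟨t3, ht3⟩ := solve_norm hp2 _ hD0 cZ x hxz hxsq
            exact ⟨x, t3, 0, ht3, by rw [← hx2]; ring⟩
          · set x : ℤ_[p] := ((ξ.val : ℕ) : ℤ_[p]) with hxdef
            have htx : PadicInt.toZMod x = ξ := lift_toZMod ξ
            obtain ⟨t3, ht3⟩ := solve_norm hp2 _ hD0 cZ x
              (by rw [htx, hcZ, htr]; exact hz1)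
              (by rw [htx, hcZ, htr, htD]; exact hP1)
            obtain ⟨t4, ht4⟩ := solve_norm hp2 _ hD0 cZ' x
              (by rw [htx, htc']; exact hz2)
              (by rw [htx, htc', htD]; exact hP2)
            exact ⟨x, t3, t4, ht3, ht4⟩
      obtain ⟨x, t3, t4, hQ1, hQ2⟩ := hmain
      -- norm representation of r + A
      obtain ⟨ξ₂, hp1, -, hnb2⟩ := exists_xi hp2 hp5 ((D : ZMod p)) (rb + Abar) (rb + Abar)
        hsqD hrA hrA
      have hz3 : ξ₂^2 - (rb + Abar) ≠ 0 := fun h => hnb2 ⟨h, h⟩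
      set x2 : ℤ_[p] := ((ξ₂.val : ℕ) : ℤ_[p]) with hx2def
      have htx2 : PadicInt.toZMod x2 = ξ₂ := lift_toZMod ξ₂
      have htuv : PadicInt.toZMod (r + (A : ℤ_[p])) = rb + Abar := by
        rw [map_add, htr, map_intCast]
      obtain ⟨yy, hyy⟩ := solve_norm hp2 _ hD0 (r + (A : ℤ_[p])) x2
        (by rw [htx2, htuv]; exact hz3)
        (by rw [htx2, htuv, htD]; exact hp1)
      -- assemble the point
      have hQ1c : ((x:ℚ_[p]))^2 - (D : ℚ_[p]) * ((t3:ℚ_[p]))^2 = (r : ℚ_[p]) := by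
        exact_mod_cast congrArg (fun z : ℤ_[p] => (z : ℚ_[p])) hQ1
      have hQ2c : ((x:ℚ_[p]))^2 - (D : ℚ_[p]) * ((t4:ℚ_[p]))^2 =
          ((r : ℚ_[p]) + (A : ℚ_[p])) * ((r : ℚ_[p]) + (B : ℚ_[p])) := by
        have := congrArg (fun z : ℤ_[p] => (z : ℚ_[p])) hQ2
        push_cast at this
        exact this
      have huv : ((r : ℚ_[p]) + (A : ℚ_[p])) ≠ 0 := by
        have h1 : ((r : ℚ_[p]) + (A : ℚ_[p])) = (((r + (A : ℤ_[p])) : ℤ_[p]) : ℚ_[p]) := by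
          push_cast; ring
        rw [h1, PadicInt.coe_ne_zero]
        intro hzz
        have := congrArg PadicInt.toZMod hzz
        rw [htuv, map_zero] at this
        exact hrA this
      have hyyc : ((x2:ℚ_[p]))^2 - (D : ℚ_[p]) * ((yy:ℚ_[p]))^2 =
          (r : ℚ_[p]) + (A : ℚ_[p]) := by
        have := congrArg (fun z : ℤ_[p] => (z : ℚ_[p])) hyy
        push_cast at this
        exact this
      refine ⟨![(r : ℚ_[p]), 1, (x : ℚ_[p]), (t3 : ℚ_[p]), (t4 : ℚ_[p])], ?_, ?_, ?_, ?_⟩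
      · intro hc
        have := congrFun hc 1
        simp at this
      · show ((x:ℚ_[p]))^2 - (D : ℚ_[p]) * ((t3:ℚ_[p]))^2 - (r : ℚ_[p]) * 1 = 0
        rw [hQ1c]; ring
      · show ((x:ℚ_[p]))^2 - (D : ℚ_[p]) * ((t4:ℚ_[p]))^2 -
          ((r : ℚ_[p]) + (A : ℚ_[p]) * 1) * ((r : ℚ_[p]) + (B : ℚ_[p]) * 1) = 0
        rw [mul_one, mul_one, hQ2c]; ring
      · refine ⟨1, (r : ℚ_[p]) + (A : ℚ_[p]) * 1, Or.inr (by simp), Or.inl (by simp), ?_,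
          (x2 : ℚ_[p]), (yy : ℚ_[p]), ?_⟩
        · rw [one_mul, mul_one]
          exact huv
        · rw [one_mul, mul_one, hyyc]
end

section
/- Let D be an integer, and let p ≠ 2 be a prime with p ∤ D such that D is not a square modulo p (so p is inert in ℚ(√D)). Let A, B be nonzero integers with A ≠ B, G(A,B) ≠ 0, ν_p(A) ≤ ν_p(B) and ν_p(A) even. Then the following are equivalent: (i) there exist a nonzero t ∈ ℚ_p⁵ with Q1(t) = Q2(t) = 0 and u ∈ {t0, t1}, v ∈ {t0 + A·t1, t0 + B·t1} with u·v ≠ 0 such that u·v ≠ x² − D·y² for all x, y ∈ ℚ_p (i.e., the evaluation of the Brauer class α on S^(D;A,B)(ℚ_p) is non-constant); (ii) ν_p(B − A) > ν_p(A) and B·D is a square in ℚ_p. -/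
namespace BSD

variable {p : ℕ} [hpp : Fact p.Prime]

lemma val_eq_of_norm {z : ℚ_[p]} (hz : z ≠ 0) {n : ℤ} (h : ‖z‖ = (p:ℝ)^(-n)) :
    z.valuation = n := by
  have h1 : (1:ℝ) < p := by exact_mod_cast hpp.out.one_lt
  have := Padic.norm_eq_zpow_neg_valuation hz
  rw [this] at h
  have := zpow_right_injective₀ (by positivity) (ne_of_gt h1) h
  omega

lemma norm_lt_iff {z w : ℚ_[p]} (hz : z ≠ 0) (hw : w ≠ 0) :
    ‖z‖ < ‖w‖ ↔ w.valuation < z.valuation := by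
  have h1 : (1:ℝ) < p := by exact_mod_cast hpp.out.one_lt
  rw [Padic.norm_eq_zpow_neg_valuation hz, Padic.norm_eq_zpow_neg_valuation hw,
    zpow_lt_zpow_iff_right₀ h1]
  omega

lemma val_neg (z : ℚ_[p]) : (-z).valuation = z.valuation := by
  by_cases hz : z = 0
  · simp [hz]
  · exact val_eq_of_norm (neg_ne_zero.mpr hz) (by rw [norm_neg, Padic.norm_eq_zpow_neg_valuation hz])

lemma val_add_eq {z w : ℚ_[p]} (hz : z ≠ 0) (hlt : ‖w‖ < ‖z‖) :
    z + w ≠ 0 ∧ (z + w).valuation = z.valuation := by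
  have hne : ‖z‖ ≠ ‖w‖ := (ne_of_lt hlt).symm
  have h : ‖z + w‖ = ‖z‖ := by
    rw [add_comm, Padic.add_eq_max_of_ne (fun h => hne h.symm), max_eq_right hlt.le]
  have hz0 : z + w ≠ 0 := by
    intro h0; rw [h0, norm_zero] at h; exact hz (norm_eq_zero.mp h.symm)
  exact ⟨hz0, val_eq_of_norm hz0 (h.trans (Padic.norm_eq_zpow_neg_valuation hz))⟩

lemma res_zero_iff (z : ℤ_[p]) : PadicInt.toZMod z = 0 ↔ ‖z‖ < 1 := by
  have : PadicInt.toZMod z = 0 ↔ z ∈ RingHom.ker (PadicInt.toZMod (p := p)) :=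
    RingHom.mem_ker.symm
  rw [this, PadicInt.ker_toZMod, IsLocalRing.mem_maximalIdeal, mem_nonunits_iff,
    PadicInt.not_isUnit_iff]

lemma res_ne_zero_iff (z : ℤ_[p]) : PadicInt.toZMod z ≠ 0 ↔ ‖z‖ = 1 := by
  rw [ne_eq, res_zero_iff, not_lt]
  constructor
  · exact fun h => le_antisymm (PadicInt.norm_le_one z) h
  · exact fun h => h.symm.le

lemma norm_two (hp2 : p ≠ 2) : ‖(2 : ℤ_[p])‖ = 1 := by
  rw [← res_ne_zero_iff]
  have : (PadicInt.toZMod (2 : ℤ_[p])) = (2 : ZMod p) := map_ofNat _ 2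
  rw [this]
  have h2 : ((2:ZMod p)) = ((2:ℕ) : ZMod p) := by push_cast; ring
  rw [h2, Ne, ZMod.natCast_eq_zero_iff]
  intro h
  exact hp2 ((Nat.prime_dvd_prime_iff_eq hpp.out Nat.prime_two).mp h)

/-- Hensel: a `p`-adic integer of norm 1 whose residue is a square is a square. -/
lemma sqrt_of_res (hp2 : p ≠ 2) (c : ℤ_[p]) (hc : ‖c‖ = 1)
    (h : IsSquare (PadicInt.toZMod c)) : ∃ z : ℤ_[p], z^2 = c := by
  obtain ⟨r, hr⟩ := h
  have hr0 : r ≠ 0 := by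
    intro h0
    have : PadicInt.toZMod c = 0 := by rw [hr, h0, mul_zero]
    rw [res_zero_iff] at this
    exact absurd hc (ne_of_lt this)
  set a : ℤ_[p] := ((r.val : ℕ) : ℤ_[p]) with ha
  have hares : PadicInt.toZMod a = r := by
    rw [ha, map_natCast, ZMod.natCast_val, ZMod.cast_id]
  have hsmall : ‖a^2 - c‖ < 1 := by
    rw [← res_zero_iff]
    simp [map_sub, map_pow, hares, hr, sq]
  have hanorm : ‖a‖ = 1 := by
    rw [← res_ne_zero_iff, hares]; exact hr0
  have hda : ‖(2 : ℤ_[p]) * a‖ = 1 := by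
    rw [norm_mul, norm_two hp2, hanorm]; ring
  have hhyp : ‖(Polynomial.X^2 - Polynomial.C c).eval a‖ <
      ‖(Polynomial.derivative (Polynomial.X^2 - Polynomial.C c)).eval a‖^2 := by
    have hdeval : (Polynomial.derivative (Polynomial.X^2 - Polynomial.C c)).eval a
        = 2 * a := by
      simp
      norm_num
    have heval : (Polynomial.X^2 - Polynomial.C c).eval a = a^2 - c := by simp
    rw [hdeval, heval, hda]
    simpa using hsmall
  obtain ⟨z, hz, -⟩ := hensels_lemma hhyp
  refine ⟨z, ?_⟩
  have : z^2 - c = 0 := by simpa using hz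
  linear_combination this

lemma p_ne_zero : (p:ℚ_[p]) ≠ 0 :=
  Nat.cast_ne_zero.mpr hpp.out.ne_zero

lemma val_p_zpow (k : ℤ) : ((p:ℚ_[p])^k).valuation = k :=
  val_eq_of_norm (zpow_ne_zero k p_ne_zero) (Padic.norm_p_zpow k)

lemma decomp {z : ℚ_[p]} (hz : z ≠ 0) :
    ∃ c : ℤ_[p], ‖c‖ = 1 ∧ z = (p:ℚ_[p])^z.valuation * (c : ℚ_[p]) := by
  set k := z.valuation with hk
  have h1 : ‖z * (p:ℚ_[p])^(-k)‖ = 1 := by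
    rw [norm_mul, Padic.norm_p_zpow, Padic.norm_eq_zpow_neg_valuation hz, neg_neg, ← zpow_add₀]
    · simp [hk]
    · exact_mod_cast hpp.out.pos.ne'
  refine ⟨⟨z * (p:ℚ_[p])^(-k), h1.le⟩, h1, ?_⟩
  show z = (p:ℚ_[p])^k * (z * (p:ℚ_[p])^(-k))
  rw [mul_comm z, ← mul_assoc, ← zpow_add₀ p_ne_zero]
  simp

lemma isSquare_of (hp2 : p ≠ 2) {z : ℚ_[p]} {k : ℤ} {c : ℤ_[p]} (hc : ‖c‖ = 1)
    (hres : IsSquare (PadicInt.toZMod c)) (hk : Even k)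
    (hz : z = (p:ℚ_[p])^k * (c:ℚ_[p])) : IsSquare z := by
  obtain ⟨s, hs⟩ := sqrt_of_res hp2 c hc hres
  obtain ⟨m, hm⟩ := hk
  refine ⟨(p:ℚ_[p])^m * (s:ℚ_[p]), ?_⟩
  have : ((s:ℚ_[p]))^2 = (c:ℚ_[p]) := by
    rw [← hs]; push_cast; ring
  rw [hz, hm]
  rw [show (p:ℚ_[p])^(m+m) = ((p:ℚ_[p])^m)^2 by rw [zpow_add₀ p_ne_zero]; ring]
  rw [← this]; ring

lemma one_add_sq (hp2 : p ≠ 2) {w : ℚ_[p]} (hw : ‖w‖ < 1) : IsSquare (1 + w) := by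
  have hle : ‖w‖ ≤ 1 := hw.le
  set w' : ℤ_[p] := ⟨w, hle⟩ with hw'
  have h1 : ((1 + w' : ℤ_[p]) : ℚ_[p]) = 1 + w := by push_cast [hw']; rfl
  have hres : PadicInt.toZMod (1 + w') = 1 := by
    rw [map_add, map_one, (res_zero_iff w').mpr hw, add_zero]
  have hnorm : ‖(1 + w' : ℤ_[p])‖ = 1 := by
    rw [← res_ne_zero_iff, hres]; exact one_ne_zero
  refine isSquare_of hp2 hnorm (hres ▸ IsSquare.one) (Even.zero) ?_
  rw [zpow_zero, one_mul, h1]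

lemma even_val_of_sq {z : ℚ_[p]} (h : IsSquare z) (hz : z ≠ 0) : Even z.valuation := by
  obtain ⟨s, hs⟩ := h
  have hs0 : s ≠ 0 := by rintro rfl; simp at hs; exact hz hs
  rw [hs, Padic.valuation_mul hs0 hs0]
  exact Even.add_self _


/-- transfer of square classes along small perturbations -/
lemma transfer (hp2 : p ≠ 2) {z w c : ℚ_[p]} (hz : z ≠ 0) (hclose : ‖w - z‖ < ‖z‖)
    (h : IsSquare (z*c)) : IsSquare (w*c) := by
  have hs : IsSquare (1 + (w - z)/z) := by
    apply one_add_sq hp2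
    rw [norm_div, div_lt_one (norm_pos_iff.mpr hz)]
    exact hclose
  obtain ⟨s, hs⟩ := hs
  obtain ⟨r, hr⟩ := h
  refine ⟨r * s, ?_⟩
  have : w = z * (s * s) := by
    rw [← hs]; field_simp
    ring
  rw [this, mul_comm z, mul_assoc, hr]; ring

lemma norm_one_iff_val {e : ℚ_[p]} (he : e ≠ 0) : ‖e‖ = 1 ↔ e.valuation = 0 := by
  constructor
  · intro h
    exact val_eq_of_norm he (by rw [h]; simp)
  · intro h
    rw [Padic.norm_eq_zpow_neg_valuation he, h]; simp

variable {D : ℤ} (hpD : ¬((p:ℤ) ∣ D)) (hinert : ¬ IsSquare (D : ZMod p))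

include hpD in
lemma normD : ‖((D:ℤ_[p]))‖ = 1 := by
  rw [← res_ne_zero_iff, map_intCast, Ne, ZMod.intCast_zmod_eq_zero_iff_dvd]
  exact hpD

include hpD in
lemma normDq : ‖((D:ℚ_[p]))‖ = 1 := by
  have := normD (p := p) hpD
  simpa using this

include hpD hinert in
lemma aniso (x y : ℚ_[p]) :
    ‖x^2 - (D:ℚ_[p])*y^2‖ = max (‖x‖^2) (‖y‖^2) := by
  have hDq := normDq (p := p) hpD
  have hx2 : ‖x^2‖ = ‖x‖^2 := by rw [norm_pow]
  have hy2 : ‖(D:ℚ_[p])*y^2‖ = ‖y‖^2 := by rw [norm_mul, hDq, norm_pow, one_mul]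
  rcases eq_or_ne (‖x‖) (‖y‖) with heq | hne
  · rcases eq_or_ne (‖x‖) 0 with h0 | h0
    · have hx0 : x = 0 := norm_eq_zero.mp h0
      have hy0 : y = 0 := norm_eq_zero.mp (heq ▸ h0)
      simp [hx0, hy0]
    · have hy0 : y ≠ 0 := by
        intro h; rw [h, norm_zero] at heq; exact h0 heq
      set w := x / y with hw
      have hwn : ‖w‖ = 1 := by rw [hw, norm_div, heq, div_self (heq ▸ h0)]
      have hwle : ‖w‖ ≤ 1 := hwn.le
      set w' : ℤ_[p] := ⟨w, hwle⟩ with hw'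
      have hkey : ‖(w'^2 - D : ℤ_[p])‖ = 1 := by
        rw [← res_ne_zero_iff, map_sub, map_pow, map_intCast]
        intro h
        exact hinert ⟨PadicInt.toZMod w', by rw [← sq]; linear_combination -h⟩
      have hcoe : ((w' : ℤ_[p]) : ℚ_[p]) = w := rfl
      have hfact : x^2 - (D:ℚ_[p])*y^2 = y^2 * ((w'^2 - D : ℤ_[p]) : ℚ_[p]) := by
        push_cast [hcoe, hw]
        field_simp
      rw [hfact, norm_mul, norm_pow]
      rw [show ‖((w'^2 - D : ℤ_[p]) : ℚ_[p])‖ = ‖(w'^2 - D : ℤ_[p])‖ from rfl, hkey]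
      rw [heq, mul_one, max_self]
  · have hne2 : ‖x^2‖ ≠ ‖(D:ℚ_[p])*y^2‖ := by
      rw [hx2, hy2]
      intro h
      exact hne (by nlinarith [norm_nonneg x, norm_nonneg y])
    have : x^2 - (D:ℚ_[p])*y^2 = x^2 + (-((D:ℚ_[p])*y^2)) := by ring
    rw [this, Padic.add_eq_max_of_ne (by rwa [norm_neg]), norm_neg, hx2, hy2]

include hpD hinert in
lemma repr_ne_zero {x y : ℚ_[p]} (h : ¬(x = 0 ∧ y = 0)) : x^2 - (D:ℚ_[p])*y^2 ≠ 0 := by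
  intro h0
  have := aniso (p := p) hpD hinert x y
  rw [h0, norm_zero] at this
  rcases not_and_or.mp h with hx | hy
  · have h1 : 0 < ‖x‖^2 := by
      have := norm_pos_iff.mpr hx; positivity
    nlinarith [le_max_left (‖x‖^2) (‖y‖^2)]
  · have h1 : 0 < ‖y‖^2 := by
      have := norm_pos_iff.mpr hy; positivity
    nlinarith [le_max_right (‖x‖^2) (‖y‖^2)]

include hpD hinert in
lemma even_val_repr {z x y : ℚ_[p]} (hrep : z = x^2 - (D:ℚ_[p])*y^2) (hz : z ≠ 0) :
    Even z.valuation := by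
  have hno : ¬(x = 0 ∧ y = 0) := by
    rintro ⟨rfl, rfl⟩; simp at hrep; exact hz hrep
  have hmax := aniso (p := p) hpD hinert x y
  rw [← hrep] at hmax
  rcases max_cases (‖x‖^2) (‖y‖^2) with ⟨h1, -⟩ | ⟨h1, -⟩ <;> rw [h1] at hmax
  · have hx : x ≠ 0 := by
      intro h; rw [h, norm_zero] at hmax; simp at hmax; exact hz hmax
    have : z.valuation = 2 * x.valuation :=
      val_eq_of_norm hz (by rw [hmax, Padic.norm_eq_zpow_neg_valuation hx, ← zpow_natCast _ 2, ← zpow_mul]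
                            congr 1
                            ring)
    exact ⟨x.valuation, by omega⟩
  · have hy : y ≠ 0 := by
      intro h; rw [h, norm_zero] at hmax; simp at hmax; exact hz hmax
    have : z.valuation = 2 * y.valuation :=
      val_eq_of_norm hz (by rw [hmax, Padic.norm_eq_zpow_neg_valuation hy, ← zpow_natCast _ 2, ← zpow_mul]
                            congr 1
                            ring)
    exact ⟨y.valuation, by omega⟩

include hpD hinert in
lemma not_repr {z : ℚ_[p]} (hz : z ≠ 0) (hodd : ¬ Even z.valuation) :
    ∀ x y : ℚ_[p], z ≠ x^2 - (D:ℚ_[p])*y^2 := by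
  intro x y hrep
  exact hodd (even_val_repr hpD hinert hrep hz)


include hpD in
lemma resD_ne_zero : ((D : ZMod p)) ≠ 0 := by
  rw [Ne, ZMod.intCast_zmod_eq_zero_iff_dvd]; exact hpD

include hpD in
/-- Any unit of `ℤ_p` is represented by the norm form `x² - D y²`. -/
lemma unit_repr (hp2 : p ≠ 2) (c : ℤ_[p]) (hc : ‖c‖ = 1) :
    ∃ x y : ℤ_[p], x^2 - (D:ℤ_[p])*y^2 = c := by
  have hcard : Fintype.card (ZMod p) % 2 = 1 := by
    rw [ZMod.card]
    exact Nat.odd_iff.mp (hpp.out.odd_of_ne_two hp2)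
  have hD0 : ((D : ZMod p)) ≠ 0 := resD_ne_zero hpD
  set c' : ZMod p := PadicInt.toZMod c with hc'
  have hc'0 : c' ≠ 0 := (res_ne_zero_iff c).mpr hc
  obtain ⟨a, b, hab⟩ := FiniteField.exists_root_sum_quadratic
    (f := Polynomial.X^2 - Polynomial.C c') (g := -(Polynomial.C (D:ZMod p) * Polynomial.X^2))
    (Polynomial.degree_X_pow_sub_C (by norm_num) c')
    (by rw [Polynomial.degree_neg]
        exact (Polynomial.degree_C_mul_X_pow 2 hD0))
    hcard
  simp only [Polynomial.eval_sub, Polynomial.eval_pow, Polynomial.eval_X, Polynomial.eval_C,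
    Polynomial.eval_neg, Polynomial.eval_mul] at hab
  -- hab : a^2 - c' + -(D * b^2) = 0
  rcases eq_or_ne a 0 with ha | ha
  · -- c' = -D b², b ≠ 0; take x = 0, solve D*y² = -c
    have hb : b ≠ 0 := by
      intro h0; rw [ha, h0] at hab; simp at hab; exact hc'0 hab
    have hDu : IsUnit ((D:ℤ_[p])) := PadicInt.isUnit_iff.mpr (normD hpD)
    obtain ⟨Du, hDu⟩ := hDu
    set d : ℤ_[p] := ((Du⁻¹ : ℤ_[p]ˣ) : ℤ_[p]) * (-c) with hd
    have hDd : (D:ℤ_[p]) * d = -c := by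
      rw [hd, ← hDu, ← mul_assoc]
      simp
    have hdn : ‖d‖ = 1 := by
      rw [hd, norm_mul, PadicInt.norm_units, norm_neg, hc, one_mul]
    have hres : PadicInt.toZMod d = b * b := by
      have h1 : (D:ZMod p) * PadicInt.toZMod d = -c' := by
        have := congrArg PadicInt.toZMod hDd
        simpa [hc'] using this
      have h2 : (D:ZMod p) * (b*b) = -c' := by rw [ha] at hab; linear_combination -hab
      have := h1.trans h2.symm
      exact mul_left_cancel₀ hD0 this
    obtain ⟨z, hz⟩ := sqrt_of_res hp2 d hdn (hres ▸ ⟨b, rfl⟩)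
    exact ⟨0, z, by rw [hz]; linear_combination -hDd⟩
  · -- a ≠ 0 : take y = b.val, solve x² = c + D y²
    set y0 : ℤ_[p] := ((b.val : ℕ) : ℤ_[p]) with hy0
    have hy0res : PadicInt.toZMod y0 = b := by
      rw [hy0, map_natCast, ZMod.natCast_val, ZMod.cast_id]
    set e : ℤ_[p] := c + (D:ℤ_[p]) * y0^2 with he
    have heres : PadicInt.toZMod e = a * a := by
      rw [he, map_add, map_mul, map_pow, map_intCast, hy0res, ← hc']
      linear_combination -hab
    have hen : ‖e‖ = 1 := by
      rw [← res_ne_zero_iff, heres]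
      exact mul_ne_zero ha ha
    obtain ⟨z, hz⟩ := sqrt_of_res hp2 e hen (heres ▸ ⟨a, rfl⟩)
    exact ⟨z, y0, by rw [hz]; linear_combination he⟩

include hpD in
lemma exists_repr (hp2 : p ≠ 2) {z : ℚ_[p]} (hz : z ≠ 0) (he : Even z.valuation) :
    ∃ x y : ℚ_[p], z = x^2 - (D:ℚ_[p])*y^2 := by
  obtain ⟨c, hc1, hcz⟩ := decomp hz
  obtain ⟨k, hk⟩ := he
  obtain ⟨x, y, hxy⟩ := unit_repr hpD hp2 c hc1
  refine ⟨(p:ℚ_[p])^k * (x:ℚ_[p]), (p:ℚ_[p])^k * (y:ℚ_[p]), ?_⟩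
  have hcoe : ((x^2 - (D:ℤ_[p])*y^2 : ℤ_[p]) : ℚ_[p]) = (x:ℚ_[p])^2 - (D:ℚ_[p])*(y:ℚ_[p])^2 := by
    push_cast; ring
  have hsq : (p:ℚ_[p])^z.valuation = ((p:ℚ_[p])^k)^2 := by
    rw [hk, zpow_add₀ p_ne_zero]; ring
  rw [hcz, hsq, ← congrArg (Subtype.val) hxy]
  rw [show ((x^2 - (D:ℤ_[p])*y^2 : ℤ_[p]) : ℚ_[p]) = (x:ℚ_[p])^2 - (D:ℚ_[p])*(y:ℚ_[p])^2 from hcoe]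
  ring

-- evaluation helper
lemma vec5 (a b c d e : ℚ_[p]) :
    (![a,b,c,d,e]) 0 = a ∧ (![a,b,c,d,e]) 1 = b ∧ (![a,b,c,d,e]) 2 = c ∧
    (![a,b,c,d,e]) 3 = d ∧ (![a,b,c,d,e]) 4 = e := by
  refine ⟨rfl, rfl, ?_, ?_, ?_⟩
  · rw [Matrix.cons_val_two]; rfl
  · rw [Matrix.cons_val_three]; rfl
  · rw [Matrix.cons_val_four]; rfl

lemma sq_oneDiv {c z : ℚ_[p]} (hc : c ≠ 0) (h : IsSquare (z * c)) : IsSquare (z * (1/c)) := by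
  obtain ⟨r, hr⟩ := h
  refine ⟨r/c, ?_⟩
  rw [div_mul_div_comm, ← hr]
  field_simp

include hpD hinert in
lemma backward (hp2 : p ≠ 2) {A B : ℤ}
    (hA : A ≠ 0) (hB : B ≠ 0) (hABne : A ≠ B)
    (hval : padicValInt p A ≤ padicValInt p B) (heven : Even (padicValInt p A))
    (hlt : padicValInt p A < padicValInt p (B - A))
    (hBD : IsSquare ((B:ℚ_[p]) * (D:ℚ_[p]))) :
    ∃ t : Fin 5 → ℚ_[p], t ≠ 0 ∧
      (t 2)^2 - (D:ℚ_[p]) * (t 3)^2 - t 0 * t 1 = 0 ∧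
      (t 2)^2 - (D:ℚ_[p]) * (t 4)^2 - (t 0 + (A:ℚ_[p]) * t 1) * (t 0 + (B:ℚ_[p]) * t 1) = 0 ∧
      ∃ u v : ℚ_[p], (u = t 0 ∨ u = t 1) ∧
        (v = t 0 + (A:ℚ_[p]) * t 1 ∨ v = t 0 + (B:ℚ_[p]) * t 1) ∧
        u * v ≠ 0 ∧ ∀ x y : ℚ_[p], u * v ≠ x^2 - (D:ℚ_[p])*y^2 := by
  have hp1 : (1:ℝ) < (p:ℝ) := by exact_mod_cast hpp.out.one_lt
  have hp0 : (0:ℝ) < (p:ℝ) := lt_trans one_pos hp1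
  have hA0 : (A:ℚ_[p]) ≠ 0 := Int.cast_ne_zero.mpr hA
  have hB0 : (B:ℚ_[p]) ≠ 0 := Int.cast_ne_zero.mpr hB
  have hBAint : B - A ≠ 0 := sub_ne_zero.mpr (Ne.symm hABne)
  have hBA0 : (B:ℚ_[p]) - (A:ℚ_[p]) ≠ 0 := by
    have := Int.cast_ne_zero (α := ℚ_[p]) |>.mpr hBAint
    push_cast at this; exact this
  have hD0 : (D:ℚ_[p]) ≠ 0 := by
    intro h0
    have h1 := normDq (p := p) hpD
    rw [h0, norm_zero] at h1
    norm_num at h1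
  have hvA : (A:ℚ_[p]).valuation = (padicValInt p A : ℤ) := Padic.valuation_intCast A
  have hvB : (B:ℚ_[p]).valuation = (padicValInt p B : ℤ) := Padic.valuation_intCast B
  have hvBA : ((B:ℚ_[p]) - (A:ℚ_[p])).valuation = (padicValInt p (B-A) : ℤ) := by
    rw [show (B:ℚ_[p]) - (A:ℚ_[p]) = ((B - A : ℤ) : ℚ_[p]) by push_cast; ring,
      Padic.valuation_intCast]
  have haeven : Even ((padicValInt p A : ℤ)) := (Int.even_coe_nat _).mpr heven
  have hab : (padicValInt p A : ℤ) ≤ (padicValInt p B : ℤ) := by exact_mod_cast hval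
  have hνa : (padicValInt p A : ℤ) < (padicValInt p (B-A) : ℤ) := by exact_mod_cast hlt
  -- valuation of B equals valuation of A
  have hvBeq : (B:ℚ_[p]).valuation = (padicValInt p A : ℤ) := by
    rcases lt_or_eq_of_le hab with h|h
    · exfalso
      have hlt2 : ‖(B:ℚ_[p])‖ < ‖-(A:ℚ_[p])‖ := by
        rw [norm_neg, norm_lt_iff hB0 hA0, hvA, hvB]; exact h
      have h2 := (val_add_eq (neg_ne_zero.mpr hA0) hlt2).2
      rw [show -(A:ℚ_[p]) + (B:ℚ_[p]) = (B:ℚ_[p]) - (A:ℚ_[p]) by ring, hvBA, val_neg, hvA] at h2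
      omega
    · rw [hvB, ← h]
  -- A*D is a square
  have hADsq : IsSquare ((A:ℚ_[p]) * (D:ℚ_[p])) := by
    apply transfer (c := (D:ℚ_[p])) hp2 hB0 ?_ hBD
    rw [show (A:ℚ_[p]) - (B:ℚ_[p]) = -((B:ℚ_[p]) - (A:ℚ_[p])) by ring, norm_neg,
      norm_lt_iff hBA0 hB0, hvBA, hvBeq]
    exact hνa
  have hAD1sq : IsSquare ((A:ℚ_[p]) * ((1:ℚ_[p])/(D:ℚ_[p]))) := sq_oneDiv hD0 hADsq
  obtain ⟨σ, hσ⟩ := hAD1sq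
  have hDσ : (D:ℚ_[p]) * (σ*σ) = (A:ℚ_[p]) := by
    have := hσ
    field_simp at this
    rw [this]; ring

  by_cases hνodd : ¬ Even ((padicValInt p (B-A) : ℤ))
  · -- odd case: explicit point with t0 = -A
    set t : Fin 5 → ℚ_[p] := ![-(A:ℚ_[p]), 1, 0, σ, 0] with ht
    obtain ⟨e0, e1, e2, e3, e4⟩ := vec5 (-(A:ℚ_[p])) 1 0 σ 0
    rw [← ht] at e0 e1 e2 e3 e4
    refine ⟨t, ?_, ?_, ?_, t 1, t 0 + (B:ℚ_[p]) * t 1, Or.inr rfl, Or.inr rfl, ?_, ?_⟩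
    · intro h0
      have := congrFun h0 1
      rw [e1] at this
      exact one_ne_zero this
    · rw [e0, e1, e2, e3]
      linear_combination -hDσ
    · rw [e0, e1, e2, e4]
      ring
    · rw [e0, e1]
      intro h0
      exact hBA0 (by linear_combination h0)
    · intro x' y'
      rw [e0, e1]
      have huv : (1:ℚ_[p]) * (-(A:ℚ_[p]) + (B:ℚ_[p]) * 1) = (B:ℚ_[p]) - (A:ℚ_[p]) := by ring
      rw [huv]
      exact not_repr hpD hinert hBA0 (by rw [hvBA]; exact hνodd) x' y'
  · -- even case
    rw [not_not] at hνodd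
    -- even case
    have hp0' : (p:ℝ) ≠ 0 := ne_of_gt hp0
    set m : ℤ := (padicValInt p A : ℤ) with hm
    set ν : ℤ := (padicValInt p (B-A) : ℤ) with hν
    have hm0 : (0:ℤ) ≤ m := Int.ofNat_nonneg _
    have hν2 : m + 2 ≤ ν := by
      simp only [Int.even_iff] at haeven hνodd; omega
    set P : ℚ_[p] := (p:ℚ_[p])^(padicValInt p A + 1) with hP
    have hPne : P ≠ 0 := pow_ne_zero _ p_ne_zero
    have hPnorm : ‖P‖ = (p:ℝ)^(-(m+1)) := by
      rw [hP, Padic.norm_p_pow]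
      congr 1
    have hPval : P.valuation = m + 1 := by
      have h1 := val_p_zpow (p := p) (m + 1)
      have h2 : (p:ℚ_[p])^(m+1) = P := by
        rw [hP, show m + 1 = ((padicValInt p A + 1 : ℕ) : ℤ) by push_cast [hm]; ring]
        exact zpow_natCast _ _
      rwa [h2] at h1
    have hAD1sq : IsSquare ((A:ℚ_[p]) * ((1:ℚ_[p])/(D:ℚ_[p]))) := ⟨σ, hσ⟩
    clear_value P
    have hAnorm : ‖(A:ℚ_[p])‖ = (p:ℝ)^(-m) := by
      rw [Padic.norm_eq_zpow_neg_valuation hA0, hvA]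
    have hBAnorm : ‖(B:ℚ_[p]) - (A:ℚ_[p])‖ = (p:ℝ)^(-ν) := by
      rw [Padic.norm_eq_zpow_neg_valuation hBA0, hvBA]
    have hest : ∀ e' : ℚ_[p], ‖e'‖ = 1 → ‖P*(e'*((B:ℚ_[p])-(A:ℚ_[p])))‖ < ‖P‖*‖P‖ := by
      intro e' he'
      rw [norm_mul, norm_mul, he', one_mul, hPnorm, hBAnorm, ← zpow_add₀ hp0',
        ← zpow_add₀ hp0']
      rw [zpow_lt_zpow_iff_right₀ hp1]
      omega
    -- the two branches produce e, w
    obtain ⟨e, w, he1, hwle, hsqB⟩ : ∃ e w : ℚ_[p], ‖e‖ = 1 ∧ ‖w‖ ≤ 1 ∧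
        IsSquare (((P*w)^2 - (P*e)*((B:ℚ_[p]) - (A:ℚ_[p]) + P*e)) * ((1:ℚ_[p])/(D:ℚ_[p]))) := by
      have hD1le : ‖1 + (D:ℚ_[p])‖ ≤ 1 := by
        rw [show (1:ℚ_[p]) + (D:ℚ_[p]) = ((1 + D : ℤ):ℚ_[p]) by push_cast; ring]
        exact Padic.norm_int_le_one _
      rcases lt_or_eq_of_le hD1le with hD1 | hD1
      · -- D ≡ -1 mod p : w = 0, e = 1
        refine ⟨1, 0, norm_one, by simp, ?_⟩
        have hnegD : IsSquare (-(D:ℚ_[p])) := by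
          have hid : -(D:ℚ_[p]) = 1 + (-(1 + (D:ℚ_[p]))) := by ring
          rw [hid]
          exact one_add_sq hp2 (by rw [norm_neg]; exact hD1)
        obtain ⟨r, hr⟩ := hnegD
        have hzne : -(P*P) ≠ 0 := neg_ne_zero.mpr (mul_ne_zero hPne hPne)
        have hzsq : IsSquare ((-(P*P)) * ((1:ℚ_[p])/(D:ℚ_[p]))) :=
          sq_oneDiv hD0 ⟨P*r, by linear_combination (P*P) * hr⟩
        have hclose : ‖((P*(0:ℚ_[p]))^2 - (P*1)*((B:ℚ_[p]) - (A:ℚ_[p]) + P*1)) - (-(P*P))‖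
            < ‖-(P*P)‖ := by
          have hid : ((P*(0:ℚ_[p]))^2 - (P*1)*((B:ℚ_[p]) - (A:ℚ_[p]) + P*1)) - (-(P*P))
              = -(P*((1:ℚ_[p])*((B:ℚ_[p])-(A:ℚ_[p])))) := by ring
          rw [hid, norm_neg, norm_neg,
            show ‖P*P‖ = ‖P‖*‖P‖ from norm_mul _ _]
          exact hest 1 norm_one
        exact transfer hp2 hzne hclose hzsq
      · -- |1 + D| = 1 : w = (1+D)/2, e = (D-1)/2
        have h2norm : ‖(2:ℚ_[p])‖ = 1 := by
          have hle := Padic.norm_int_le_one (p := p) 2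
          have hiff := Padic.norm_intCast_lt_one_iff (p := p) (k := 2)
          have hnd : ¬ ((p:ℤ) ∣ 2) := by
            intro h
            have h' : p ∣ 2 := by exact_mod_cast h
            exact hp2 ((Nat.prime_dvd_prime_iff_eq hpp.out Nat.prime_two).mp h')
          push_cast at hle hiff
          rcases lt_or_eq_of_le hle with h|h
          · exact absurd (hiff.mp h) hnd
          · exact h
        have heD : ‖(D:ℚ_[p]) - 1‖ = 1 := by
          have hle : ‖(D:ℚ_[p]) - 1‖ ≤ 1 := by
            rw [show (D:ℚ_[p]) - 1 = ((D - 1 : ℤ):ℚ_[p]) by push_cast; ring]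
            exact Padic.norm_int_le_one _
          rcases lt_or_eq_of_le hle with h|h
          · exfalso
            rw [show (D:ℚ_[p]) - 1 = ((D - 1 : ℤ):ℚ_[p]) by push_cast; ring] at h
            have hdvd := Padic.norm_intCast_lt_one_iff.mp h
            have hz : ((D - 1 : ℤ) : ZMod p) = 0 := (ZMod.intCast_zmod_eq_zero_iff_dvd _ _).mpr hdvd
            have hD1' : (D : ZMod p) = 1 := by
              push_cast at hz
              linear_combination hz
            exact hinert (by rw [hD1']; exact IsSquare.one)
          · exact h
        set e : ℚ_[p] := ((D:ℚ_[p]) - 1)/2 with he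
        set w : ℚ_[p] := (1 + (D:ℚ_[p]))/2 with hw
        have he1 : ‖e‖ = 1 := by rw [he, norm_div, heD, h2norm, div_one]
        have hw1 : ‖w‖ = 1 := by rw [hw, norm_div, ← hD1, h2norm, div_one]
        have hwe : w^2 - e^2 = (D:ℚ_[p]) := by
          rw [hw, he]
          field_simp
          ring
        refine ⟨e, w, he1, hw1.le, ?_⟩
        have hzne : P*P*(D:ℚ_[p]) ≠ 0 := mul_ne_zero (mul_ne_zero hPne hPne) hD0
        have hzsq : IsSquare ((P*P*(D:ℚ_[p])) * ((1:ℚ_[p])/(D:ℚ_[p]))) :=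
          sq_oneDiv hD0 ⟨P*(D:ℚ_[p]), by ring⟩
        have hclose : ‖((P*w)^2 - (P*e)*((B:ℚ_[p]) - (A:ℚ_[p]) + P*e)) - (P*P*(D:ℚ_[p]))‖
            < ‖P*P*(D:ℚ_[p])‖ := by
          have hid : ((P*w)^2 - (P*e)*((B:ℚ_[p]) - (A:ℚ_[p]) + P*e)) - (P*P*(D:ℚ_[p]))
              = -(P*(e*((B:ℚ_[p])-(A:ℚ_[p])))) := by
            linear_combination (P*P) * hwe
          rw [hid, norm_neg,
            show ‖P*P*(D:ℚ_[p])‖ = ‖P‖*‖P‖ from by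
              rw [norm_mul, norm_mul, normDq hpD, mul_one]]
          exact hest e he1
        exact transfer hp2 hzne hclose hzsq
    -- common construction
    set ε : ℚ_[p] := P * e with hε
    set x2 : ℚ_[p] := P * w with hx2
    have he0 : e ≠ 0 := by intro h0; rw [h0, norm_zero] at he1; norm_num at he1
    have hε0 : ε ≠ 0 := mul_ne_zero hPne he0
    have hcloseA : ‖(x2^2 - (-(A:ℚ_[p]) + ε)) - (A:ℚ_[p])‖ < ‖(A:ℚ_[p])‖ := by
      have hid : (x2^2 - (-(A:ℚ_[p]) + ε)) - (A:ℚ_[p]) = P*(P*w^2) + (-(P*e)) := by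
        rw [hx2, hε]; ring
      rw [hid, hAnorm]
      apply lt_of_le_of_lt (Padic.nonarchimedean _ _)
      apply max_lt
      · rw [norm_mul, norm_mul, norm_pow, hPnorm]
        have hw2 : ‖w‖^2 ≤ 1 := pow_le_one₀ (norm_nonneg w) hwle
        have hpos : (0:ℝ) < (p:ℝ)^(-(m+1)) := zpow_pos hp0 _
        calc (p:ℝ)^(-(m+1)) * ((p:ℝ)^(-(m+1)) * ‖w‖^2)
            ≤ (p:ℝ)^(-(m+1)) * ((p:ℝ)^(-(m+1)) * 1) :=
              mul_le_mul_of_nonneg_left (mul_le_mul_of_nonneg_left hw2 hpos.le) hpos.le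
          _ = (p:ℝ)^(-(m+1) + -(m+1)) := by rw [mul_one, ← zpow_add₀ hp0']
          _ < (p:ℝ)^(-m) := by rw [zpow_lt_zpow_iff_right₀ hp1]; omega
      · rw [norm_neg, norm_mul, hPnorm, he1, mul_one, zpow_lt_zpow_iff_right₀ hp1]
        omega
    have hsqA : IsSquare ((x2^2 - (-(A:ℚ_[p]) + ε)) * ((1:ℚ_[p])/(D:ℚ_[p]))) :=
      transfer hp2 hA0 hcloseA hAD1sq
    obtain ⟨s3, hs3⟩ := hsqA
    obtain ⟨s4, hs4⟩ := hsqB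
    have hDs3 : (D:ℚ_[p]) * (s3*s3) = x2^2 - (-(A:ℚ_[p]) + ε) := by
      rw [← hs3]; field_simp
    have hDs4 : (D:ℚ_[p]) * (s4*s4) = x2^2 - ε*((B:ℚ_[p]) - (A:ℚ_[p]) + ε) := by
      rw [← hs4]; field_simp
    set t : Fin 5 → ℚ_[p] := ![-(A:ℚ_[p]) + ε, 1, x2, s3, s4] with ht
    obtain ⟨e0', e1', e2', e3', e4'⟩ := vec5 (-(A:ℚ_[p]) + ε) 1 x2 s3 s4
    rw [← ht] at e0' e1' e2' e3' e4'
    refine ⟨t, ?_, ?_, ?_, t 1, t 0 + (A:ℚ_[p]) * t 1, Or.inr rfl, Or.inl rfl, ?_, ?_⟩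
    · intro h0
      have := congrFun h0 1
      rw [e1'] at this
      exact one_ne_zero this
    · rw [e0', e1', e2', e3']
      linear_combination -hDs3
    · rw [e0', e1', e2', e4']
      linear_combination -hDs4
    · rw [e0', e1']
      intro h0
      exact hε0 (by linear_combination h0)
    · intro x' y'
      rw [e0', e1']
      have hid : (1:ℚ_[p]) * ((-(A:ℚ_[p]) + ε) + (A:ℚ_[p]) * 1) = ε := by ring
      rw [hid]
      apply not_repr hpD hinert hε0 ?_ x' y'
      rw [hε, Padic.valuation_mul hPne he0, hPval, (norm_one_iff_val he0).mp he1]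
      simp only [Int.even_iff] at haeven ⊢
      omega

include hpD hinert in
lemma forward (hp2 : p ≠ 2) {A B : ℤ}
    (hA : A ≠ 0) (hB : B ≠ 0) (hABne : A ≠ B)
    (hval : padicValInt p A ≤ padicValInt p B) (heven : Even (padicValInt p A))
    (t : Fin 5 → ℚ_[p])
    (hQ1 : (t 2)^2 - (D:ℚ_[p]) * (t 3)^2 - t 0 * t 1 = 0)
    (hQ2 : (t 2)^2 - (D:ℚ_[p]) * (t 4)^2 - (t 0 + (A:ℚ_[p]) * t 1) * (t 0 + (B:ℚ_[p]) * t 1) = 0)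
    (u v : ℚ_[p]) (hu : u = t 0 ∨ u = t 1)
    (hv : v = t 0 + (A:ℚ_[p]) * t 1 ∨ v = t 0 + (B:ℚ_[p]) * t 1)
    (huv0 : u * v ≠ 0) (hnr : ∀ x y : ℚ_[p], u * v ≠ x^2 - (D:ℚ_[p])*y^2) :
    padicValInt p A < padicValInt p (B - A) ∧ IsSquare ((B:ℚ_[p]) * (D:ℚ_[p])) := by
  set x := t 0 with hxdef
  set y := t 1 with hydef
  set LA := x + (A:ℚ_[p]) * y with hLA
  set LB := x + (B:ℚ_[p]) * y with hLB
  have hA0 : (A:ℚ_[p]) ≠ 0 := Int.cast_ne_zero.mpr hA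
  have hB0 : (B:ℚ_[p]) ≠ 0 := Int.cast_ne_zero.mpr hB
  have hBAint : B - A ≠ 0 := sub_ne_zero.mpr (Ne.symm hABne)
  have hBA0 : (B:ℚ_[p]) - (A:ℚ_[p]) ≠ 0 := by
    have := Int.cast_ne_zero (α := ℚ_[p]) |>.mpr hBAint
    push_cast at this; exact this
  have hu0 : u ≠ 0 := left_ne_zero_of_mul huv0
  have hv0 : v ≠ 0 := right_ne_zero_of_mul huv0
  have hvA : (A:ℚ_[p]).valuation = (padicValInt p A : ℤ) := Padic.valuation_intCast A
  have hvB : (B:ℚ_[p]).valuation = (padicValInt p B : ℤ) := Padic.valuation_intCast B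
  have hvBA : ((B:ℚ_[p]) - (A:ℚ_[p])).valuation = (padicValInt p (B-A) : ℤ) := by
    rw [show (B:ℚ_[p]) - (A:ℚ_[p]) = ((B - A : ℤ) : ℚ_[p]) by push_cast; ring,
      Padic.valuation_intCast]
  have haeven : Even ((padicValInt p A : ℤ)) := (Int.even_coe_nat _).mpr heven
  have hab : (padicValInt p A : ℤ) ≤ (padicValInt p B : ℤ) := by exact_mod_cast hval
  have q1eq : (t 2)^2 - (D:ℚ_[p]) * (t 3)^2 = x * y := by linear_combination hQ1
  have q2eq : (t 2)^2 - (D:ℚ_[p]) * (t 4)^2 = LA * LB := by linear_combination hQ2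
  -- the goal, expressed with valuations
  have hgoal : ((padicValInt p A : ℤ) < (padicValInt p (B-A) : ℤ)
      ∧ IsSquare ((B:ℚ_[p]) * (D:ℚ_[p])))
      → padicValInt p A < padicValInt p (B - A) ∧ IsSquare ((B:ℚ_[p]) * (D:ℚ_[p])) := by
    intro ⟨h1, h2⟩
    exact ⟨by exact_mod_cast h1, h2⟩
  apply hgoal
  have hodd : ¬ Even ((u*v).valuation) := by
    intro he
    obtain ⟨x', y', h'⟩ := exists_repr hpD hp2 huv0 he
    exact hnr x' y' h'
  have hoddsum : ¬ Even (u.valuation + v.valuation) := by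
    rwa [← Padic.valuation_mul hu0 hv0]
  -- y ≠ 0
  have hy : y ≠ 0 := by
    intro hy0
    have hvx : v = x := by
      rcases hv with h|h
      · rw [h, hLA, hy0]; ring
      · rw [h, hLB, hy0]; ring
    have hux : u = x := by
      rcases hu with h|h
      · exact h
      · exact absurd (h.trans hy0) hu0
    exact hnr x 0 (by rw [hux, hvx]; ring)
  -- x ≠ 0
  have hx : x ≠ 0 := by
    intro hx0
    have hux : u = y := by
      rcases hu with h|h
      · exact absurd (h.trans hx0) hu0
      · exact h
    have hLAy : LA = (A:ℚ_[p]) * y := by rw [hLA, hx0]; ring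
    have hLBy : LB = (B:ℚ_[p]) * y := by rw [hLB, hx0]; ring
    have hq2ne : LA * LB ≠ 0 := by
      rw [hLAy, hLBy]
      exact mul_ne_zero (mul_ne_zero hA0 hy) (mul_ne_zero hB0 hy)
    have he2 := even_val_repr hpD hinert q2eq.symm hq2ne
    have hval2 : (LA*LB).valuation =
        ((padicValInt p A:ℤ) + y.valuation) + ((padicValInt p B:ℤ) + y.valuation) := by
      rw [hLAy, hLBy, Padic.valuation_mul (mul_ne_zero hA0 hy) (mul_ne_zero hB0 hy),
        Padic.valuation_mul hA0 hy, Padic.valuation_mul hB0 hy, hvA, hvB]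
    rw [hval2] at he2
    have hvv : v.valuation = (padicValInt p A:ℤ) + y.valuation ∨
        v.valuation = (padicValInt p B:ℤ) + y.valuation := by
      rcases hv with h|h
      · left; rw [h, hLAy, Padic.valuation_mul hA0 hy, hvA]
      · right; rw [h, hLBy, Padic.valuation_mul hB0 hy, hvB]
    rw [hux] at hoddsum
    simp only [Int.even_iff] at he2 haeven hoddsum
    rcases hvv with h|h <;> rw [h] at hoddsum <;> omega
  -- notation for valuations
  by_cases hLA0 : LA = 0
  · -- case LA = 0
    have hxeq : x = -(A:ℚ_[p]) * y := by
      have h0 : x + (A:ℚ_[p]) * y = 0 := by rw [← hLA]; exact hLA0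
      linear_combination h0
    have hq20 : LA * LB = 0 := by rw [hLA0, zero_mul]
    have hvan : t 2 = 0 ∧ t 4 = 0 := by
      by_contra hcon
      exact repr_ne_zero hpD hinert hcon (by rw [q2eq, hq20])
    have ht3eq : -(D:ℚ_[p]) * (t 3)^2 = -(A:ℚ_[p]) * y^2 := by
      have := q1eq
      rw [hvan.1, hxeq] at this
      linear_combination this
    have ht30 : t 3 ≠ 0 := by
      intro h0
      rw [h0] at ht3eq
      have : (A:ℚ_[p]) * y^2 = 0 := by linear_combination ht3eq
      exact (mul_ne_zero hA0 (pow_ne_zero 2 hy)) this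
    have hADsq : IsSquare ((A:ℚ_[p]) * (D:ℚ_[p])) := by
      refine ⟨(D:ℚ_[p]) * t 3 / y, ?_⟩
      have hD0 : (D:ℚ_[p]) ≠ 0 := by
        intro h0
        rw [h0] at ht3eq
        exact (mul_ne_zero hA0 (pow_ne_zero 2 hy)) (by linear_combination ht3eq)
      rw [div_mul_div_comm, eq_div_iff (mul_ne_zero hy hy)]
      linear_combination (D:ℚ_[p]) * ht3eq
    have hvLB : LB = ((B:ℚ_[p]) - A) * y := by rw [hLB, hxeq]; ring
    have hvLB0 : LB ≠ 0 := by rw [hvLB]; exact mul_ne_zero hBA0 hy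
    have hveq : v = LB := by
      rcases hv with h|h
      · exact absurd (h.trans hLA0) hv0
      · exact h
    have hvval : v.valuation = (padicValInt p (B-A) : ℤ) + y.valuation := by
      rw [hveq, hvLB, Padic.valuation_mul hBA0 hy, hvBA]
    have huval : u.valuation = (padicValInt p A:ℤ) + y.valuation ∨ u.valuation = y.valuation := by
      rcases hu with h|h
      · left
        rw [h, hxeq, show -(A:ℚ_[p])*y = (-(A:ℚ_[p]))*y from rfl,
          Padic.valuation_mul (neg_ne_zero.mpr hA0) hy, val_neg, hvA]
      · right; rw [h]
    -- ν ≥ a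
    have hνa : (padicValInt p A:ℤ) ≤ (padicValInt p (B-A):ℤ) := by
      have hmin := Padic.le_valuation_add (x := (B:ℚ_[p])) (y := -(A:ℚ_[p]))
        (by rw [← sub_eq_add_neg]; exact hBA0)
      rw [← sub_eq_add_neg, hvBA, val_neg, hvA, hvB] at hmin
      omega
    have hνodd : ¬ Even ((padicValInt p (B-A):ℤ)) := by
      rw [hvval] at hoddsum
      rcases huval with h|h <;> rw [h] at hoddsum <;>
        simp only [Int.even_iff] at hoddsum haeven ⊢ <;> omega
    constructor
    · simp only [Int.even_iff] at hνodd haeven; omega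
    · -- transfer from A*D to B*D
      apply transfer (c := (D:ℚ_[p])) hp2 hA0 ?_ hADsq
      rw [norm_lt_iff hBA0 hA0, hvA, hvBA]
      have : (padicValInt p A:ℤ) ≠ (padicValInt p (B-A):ℤ) := by
        simp only [Int.even_iff] at hνodd haeven; omega
      omega
  by_cases hLB0 : LB = 0
  · -- case LB = 0
    have hxeq : x = -(B:ℚ_[p]) * y := by
      have h0 : x + (B:ℚ_[p]) * y = 0 := by rw [← hLB]; exact hLB0
      linear_combination h0
    have hq20 : LA * LB = 0 := by rw [hLB0, mul_zero]
    have hvan : t 2 = 0 ∧ t 4 = 0 := by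
      by_contra hcon
      exact repr_ne_zero hpD hinert hcon (by rw [q2eq, hq20])
    have ht3eq : -(D:ℚ_[p]) * (t 3)^2 = -(B:ℚ_[p]) * y^2 := by
      have := q1eq
      rw [hvan.1, hxeq] at this
      linear_combination this
    have ht30 : t 3 ≠ 0 := by
      intro h0
      rw [h0] at ht3eq
      exact (mul_ne_zero hB0 (pow_ne_zero 2 hy)) (by linear_combination ht3eq)
    have hBDsq : IsSquare ((B:ℚ_[p]) * (D:ℚ_[p])) := by
      refine ⟨(D:ℚ_[p]) * t 3 / y, ?_⟩
      have hD0 : (D:ℚ_[p]) ≠ 0 := by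
        intro h0
        rw [h0] at ht3eq
        exact (mul_ne_zero hB0 (pow_ne_zero 2 hy)) (by linear_combination ht3eq)
      rw [div_mul_div_comm, eq_div_iff (mul_ne_zero hy hy)]
      linear_combination (D:ℚ_[p]) * ht3eq
    -- parity of b
    have hq1ne : x * y ≠ 0 := mul_ne_zero hx hy
    have he1 := even_val_repr hpD hinert q1eq.symm hq1ne
    have hxyval : (x*y).valuation = ((padicValInt p B:ℤ) + y.valuation) + y.valuation := by
      rw [Padic.valuation_mul hx hy, hxeq,
        show -(B:ℚ_[p])*y = (-(B:ℚ_[p]))*y from rfl,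
        Padic.valuation_mul (neg_ne_zero.mpr hB0) hy, val_neg, hvB]
    rw [hxyval] at he1
    have hvLA : LA = ((A:ℚ_[p]) - B) * y := by rw [hLA, hxeq]; ring
    have hAB0 : (A:ℚ_[p]) - (B:ℚ_[p]) ≠ 0 := by
      intro h0; exact hBA0 (by linear_combination -h0)
    have hvAB : ((A:ℚ_[p]) - (B:ℚ_[p])).valuation = (padicValInt p (B-A) : ℤ) := by
      rw [show (A:ℚ_[p]) - (B:ℚ_[p]) = -((B:ℚ_[p]) - (A:ℚ_[p])) by ring, val_neg, hvBA]
    have hveq : v = LA := by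
      rcases hv with h|h
      · exact h
      · exact absurd (h.trans hLB0) hv0
    have hvval : v.valuation = (padicValInt p (B-A) : ℤ) + y.valuation := by
      rw [hveq, hvLA, Padic.valuation_mul hAB0 hy, hvAB]
    have huval : u.valuation = (padicValInt p B:ℤ) + y.valuation ∨ u.valuation = y.valuation := by
      rcases hu with h|h
      · left
        rw [h, hxeq, show -(B:ℚ_[p])*y = (-(B:ℚ_[p]))*y from rfl,
          Padic.valuation_mul (neg_ne_zero.mpr hB0) hy, val_neg, hvB]
      · right; rw [h]
    have hνa : (padicValInt p A:ℤ) ≤ (padicValInt p (B-A):ℤ) := by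
      have hmin := Padic.le_valuation_add (x := (B:ℚ_[p])) (y := -(A:ℚ_[p]))
        (by rw [← sub_eq_add_neg]; exact hBA0)
      rw [← sub_eq_add_neg, hvBA, val_neg, hvA, hvB] at hmin
      omega
    have hνodd : ¬ Even ((padicValInt p (B-A):ℤ)) := by
      rw [hvval] at hoddsum
      rcases huval with h|h <;> rw [h] at hoddsum <;>
        simp only [Int.even_iff] at hoddsum he1 ⊢ <;> omega
    refine ⟨?_, hBDsq⟩
    simp only [Int.even_iff] at hνodd haeven; omega
  -- main case : x, y, LA, LB all nonzero
  · have hq1ne : x * y ≠ 0 := mul_ne_zero hx hy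
    have hq2ne : LA * LB ≠ 0 := mul_ne_zero hLA0 hLB0
    have hαβ : Even (x.valuation + y.valuation) := by
      have := even_val_repr hpD hinert q1eq.symm hq1ne
      rwa [Padic.valuation_mul hx hy] at this
    have hγδ : Even (LA.valuation + LB.valuation) := by
      have := even_val_repr hpD hinert q2eq.symm hq2ne
      rwa [Padic.valuation_mul hLA0 hLB0] at this
    have humem : u.valuation = x.valuation ∨ u.valuation = y.valuation := by
      rcases hu with h|h
      · left; rw [h]
      · right; rw [h]
    have hvmem : v.valuation = LA.valuation ∨ v.valuation = LB.valuation := by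
      rcases hv with h|h
      · left; rw [h]
      · right; rw [h]
    have hmixAγ : ¬ Even (x.valuation + LA.valuation) := by
      rcases humem with h|h <;> rcases hvmem with h'|h' <;>
        rw [h, h'] at hoddsum <;>
        simp only [Int.even_iff] at hαβ hγδ hoddsum ⊢ <;> omega
    have hmixAδ : ¬ Even (x.valuation + LB.valuation) := by
      simp only [Int.even_iff] at hαβ hγδ hmixAγ ⊢; omega
    -- α = a + β and γ > α
    have hAy0 : (A:ℚ_[p]) * y ≠ 0 := mul_ne_zero hA0 hy
    have hvAy : ((A:ℚ_[p])*y).valuation = (padicValInt p A:ℤ) + y.valuation := by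
      rw [Padic.valuation_mul hA0 hy, hvA]
    have hBy0 : (B:ℚ_[p]) * y ≠ 0 := mul_ne_zero hB0 hy
    have hvBy : ((B:ℚ_[p])*y).valuation = (padicValInt p B:ℤ) + y.valuation := by
      rw [Padic.valuation_mul hB0 hy, hvB]
    have claim1 : x.valuation = (padicValInt p A:ℤ) + y.valuation ∧
        x.valuation < LA.valuation := by
      rcases lt_trichotomy x.valuation ((padicValInt p A:ℤ) + y.valuation) with h|h|h
      · exfalso
        have hlt : ‖(A:ℚ_[p])*y‖ < ‖x‖ := by
          rw [norm_lt_iff hAy0 hx, hvAy]; exact h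
        have := (val_add_eq hx hlt).2
        rw [← hLA] at this
        rw [this] at hmixAγ
        exact hmixAγ (Even.add_self _)
      · refine ⟨h, ?_⟩
        have hmin := Padic.le_valuation_add (x := x) (y := (A:ℚ_[p])*y) (by rw [← hLA]; exact hLA0)
        rw [← hLA, hvAy, ← h, min_self] at hmin
        rcases lt_or_eq_of_le hmin with h'|h'
        · exact h'
        · exfalso; rw [← h'] at hmixAγ; exact hmixAγ (Even.add_self _)
      · exfalso
        have hlt : ‖x‖ < ‖(A:ℚ_[p])*y‖ := by
          rw [norm_lt_iff hx hAy0, hvAy]; exact h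
        have h2 := (val_add_eq hAy0 hlt).2
        rw [add_comm ((A:ℚ_[p])*y) x, ← hLA] at h2
        rw [h2, hvAy] at hmixAγ
        simp only [Int.even_iff] at hmixAγ hαβ haeven; omega
    
    have claim2 : x.valuation < LB.valuation := by
      rcases lt_or_eq_of_le (show x.valuation ≤ (padicValInt p B:ℤ) + y.valuation by
        rw [claim1.1]; omega) with h|h
      · have hlt : ‖(B:ℚ_[p])*y‖ < ‖x‖ := by rw [norm_lt_iff hBy0 hx, hvBy]; exact h
        have h2 := (val_add_eq hx hlt).2
        rw [← hLB] at h2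
        rw [h2] at hmixAδ
        exact absurd (Even.add_self _) hmixAδ
      · have hmin := Padic.le_valuation_add (x := x) (y := (B:ℚ_[p])*y)
          (by rw [← hLB]; exact hLB0)
        rw [← hLB, hvBy, ← h, min_self] at hmin
        rcases lt_or_eq_of_le hmin with h'|h'
        · exact h'
        · exfalso; rw [← h'] at hmixAδ; exact hmixAδ (Even.add_self _)
    have hν2 : (padicValInt p A:ℤ) < (padicValInt p (B-A):ℤ) := by
      have hdiff : LB - LA = ((B:ℚ_[p]) - A) * y := by rw [hLA, hLB]; ring
      have hne : LB + -LA ≠ 0 := by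
        rw [← sub_eq_add_neg, hdiff]; exact mul_ne_zero hBA0 hy
      have hmin := Padic.le_valuation_add (x := LB) (y := -LA) hne
      rw [← sub_eq_add_neg, hdiff, Padic.valuation_mul hBA0 hy, hvBA, val_neg] at hmin
      have h3 := lt_of_lt_of_le (lt_min claim2 claim1.2) hmin
      have h1 := claim1.1
      omega
    refine ⟨hν2, ?_⟩
    have hvq1 : (x*y).valuation = x.valuation + y.valuation := Padic.valuation_mul hx hy
    have hvq2 : (LA*LB).valuation = LA.valuation + LB.valuation :=
      Padic.valuation_mul hLA0 hLB0
    have hq2lt : ‖LA*LB‖ < ‖x*y‖ := by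
      rw [norm_lt_iff hq2ne hq1ne, hvq1, hvq2]
      have h0 : (0:ℤ) ≤ (padicValInt p A:ℤ) := Int.ofNat_nonneg _
      have h1 := claim1.1
      have h2 := claim1.2
      have h3 := claim2
      omega
    have hmax1 : ‖x*y‖ = max (‖t 2‖^2) (‖t 3‖^2) := by rw [← q1eq]; exact aniso hpD hinert _ _
    have hmax2 : ‖LA*LB‖ = max (‖t 2‖^2) (‖t 4‖^2) := by rw [← q2eq]; exact aniso hpD hinert _ _
    have ht2small : ‖t 2‖^2 < ‖x*y‖ :=
      lt_of_le_of_lt (by rw [hmax2]; exact le_max_left _ _) hq2lt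
    have ht3big : ‖x*y‖ = ‖t 3‖^2 := by
      rcases max_cases (‖t 2‖^2) (‖t 3‖^2) with ⟨h1,h2⟩|⟨h1,h2⟩
      · exfalso; rw [hmax1, h1] at ht2small; exact lt_irrefl _ ht2small
      · rw [hmax1, h1]
    have ht30 : t 3 ≠ 0 := by
      intro h0
      rw [h0, norm_zero] at ht3big
      have h1 : ‖x*y‖ = 0 := by rw [ht3big]; norm_num
      exact hq1ne (norm_eq_zero.mp h1)
    have hD0 : (D:ℚ_[p]) ≠ 0 := by
      intro h0
      have h1 := normDq (p := p) hpD
      rw [h0, norm_zero] at h1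
      norm_num at h1
    have hz1ne : -(D:ℚ_[p]) * (t 3)^2 ≠ 0 :=
      mul_ne_zero (neg_ne_zero.mpr hD0) (pow_ne_zero 2 ht30)
    have hz1norm : ‖-(D:ℚ_[p]) * (t 3)^2‖ = ‖x*y‖ := by
      rw [norm_mul, norm_neg, normDq hpD, one_mul, norm_pow, ht3big]
    have hclose1 : ‖x*y - (-(D:ℚ_[p]) * (t 3)^2)‖ < ‖-(D:ℚ_[p]) * (t 3)^2‖ := by
      have h1 : x*y - (-(D:ℚ_[p]) * (t 3)^2) = (t 2)^2 := by linear_combination -q1eq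
      rw [h1, hz1norm, norm_pow]
      exact ht2small
    have hsq1 : IsSquare ((-(D:ℚ_[p]) * (t 3)^2) * (-(D:ℚ_[p]) / (t 3)^2)) := by
      refine ⟨(D:ℚ_[p]), ?_⟩
      field_simp
    have hsq2 : IsSquare ((x*y) * (-(D:ℚ_[p]) / (t 3)^2)) :=
      transfer hp2 hz1ne hclose1 hsq1
    have hsq3 : IsSquare (x * (-(D:ℚ_[p]) * y / (t 3)^2)) := by
      have h1 : x * (-(D:ℚ_[p]) * y / (t 3)^2) = (x*y) * (-(D:ℚ_[p]) / (t 3)^2) := by ring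
      rw [h1]; exact hsq2
    have hcloseA : ‖(-(A:ℚ_[p]) * y) - x‖ < ‖x‖ := by
      have h1 : (-(A:ℚ_[p]) * y) - x = -LA := by rw [hLA]; ring
      rw [h1, norm_neg, norm_lt_iff hLA0 hx]
      exact claim1.2
    have hsq4 : IsSquare ((-(A:ℚ_[p]) * y) * (-(D:ℚ_[p]) * y / (t 3)^2)) :=
      transfer hp2 hx hcloseA hsq3
    have hADsq : IsSquare ((A:ℚ_[p]) * (D:ℚ_[p])) := by
      obtain ⟨r, hr⟩ := hsq4
      refine ⟨r * (t 3 / y), ?_⟩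
      have h2 : (r*(t 3/y))*(r*(t 3/y)) = (r*r) * ((t 3/y)*(t 3/y)) := by ring
      rw [h2, ← hr]
      field_simp
    apply transfer (c := (D:ℚ_[p])) hp2 hA0 ?_ hADsq
    rw [norm_lt_iff hBA0 hA0, hvA, hvBA]
    exact hν2


end BSD

theorem stmt_6 (D A B : ℤ) (p : ℕ) [Fact p.Prime] (hp2 : p ≠ 2)
    (hpD : ¬ ((p : ℤ) ∣ D)) (hinert : ¬ IsSquare (D : ZMod p))
    (hA : A ≠ 0) (hB : B ≠ 0) (hABne : A ≠ B)
    (hG : A ^ 2 - 2 * A * B + B ^ 2 - 2 * A - 2 * B + 1 ≠ 0)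
    (hval : padicValInt p A ≤ padicValInt p B) (heven : Even (padicValInt p A)) :
    ((∃ t : Fin 5 → ℚ_[p], t ≠ 0 ∧
        (t 2) ^ 2 - (D : ℚ_[p]) * (t 3) ^ 2 - t 0 * t 1 = 0 ∧
        (t 2) ^ 2 - (D : ℚ_[p]) * (t 4) ^ 2 -
          (t 0 + (A : ℚ_[p]) * t 1) * (t 0 + (B : ℚ_[p]) * t 1) = 0 ∧
        ∃ u v : ℚ_[p],
          (u = t 0 ∨ u = t 1) ∧
          (v = t 0 + (A : ℚ_[p]) * t 1 ∨ v = t 0 + (B : ℚ_[p]) * t 1) ∧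
          u * v ≠ 0 ∧
          ∀ x y : ℚ_[p], u * v ≠ x ^ 2 - (D : ℚ_[p]) * y ^ 2) ↔
      (padicValInt p A < padicValInt p (B - A) ∧ IsSquare ((B : ℚ_[p]) * (D : ℚ_[p])))) := by
  constructor
  · rintro ⟨t, ht0, hQ1, hQ2, u, v, hu, hv, huv0, hnr⟩
    exact BSD.forward hpD hinert hp2 hA hB hABne hval heven t hQ1 hQ2 u v hu hv huv0 hnr
  · rintro ⟨h1, h2⟩
    obtain ⟨t, ht0, hQ1, hQ2, u, v, hu, hv, huv0, hnr⟩ :=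
      BSD.backward hpD hinert hp2 hA hB hABne hval heven h1 h2
    exact ⟨t, ht0, hQ1, hQ2, u, v, hu, hv, huv0, hnr⟩
end

section
/- For every ε > 0 there exists a constant C_ε > 0 such that for every integer N ≥ 1, the number of pairs (A,B) ∈ ℤ² with |A| ≤ N, |B| ≤ N and such that −A·B is the square of a rational number is at most C_ε·N^{1+ε}. -/
open Finset

/-- squarefree part -/
noncomputable def sfD (n : ℕ) : ℕ := (Nat.sq_mul_squarefree n).choose
/-- square-root part -/
noncomputable def sfU (n : ℕ) : ℕ := (Nat.sq_mul_squarefree n).choose_spec.choose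

lemma sf_spec (n : ℕ) : (sfU n) ^ 2 * sfD n = n ∧ Squarefree (sfD n) :=
  (Nat.sq_mul_squarefree n).choose_spec.choose_spec

lemma sf_dvd {a b m : ℕ} (ha : Squarefree a) (h : a * b = m ^ 2) : a ∣ b := by
  have ham : a ∣ m := (ha.dvd_pow_iff_dvd two_ne_zero).mp ⟨b, h.symm⟩
  obtain ⟨c, rfl⟩ := ham
  have h2 : a * b = a * (a * c ^ 2) := by rw [h]; ring
  exact ⟨c ^ 2, Nat.eq_of_mul_eq_mul_left (Nat.pos_of_ne_zero ha.ne_zero) h2⟩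

lemma sf_eq {a b m : ℕ} (ha : Squarefree a) (hb : Squarefree b) (h : a * b = m ^ 2) :
    a = b :=
  Nat.dvd_antisymm (sf_dvd ha h) (sf_dvd hb (by rw [mul_comm] at h; exact h))

/-- If `a*b` is a perfect square with `a, b ≥ 1`, the squarefree parts agree. -/
lemma sfD_eq {a b k : ℕ} (ha : 1 ≤ a) (hb : 1 ≤ b) (h : a * b = k ^ 2) :
    sfD a = sfD b := by
  obtain ⟨hda, hsa⟩ := sf_spec a
  obtain ⟨hdb, hsb⟩ := sf_spec b
  have hkey : sfD a * sfD b * (sfU a * sfU b) ^ 2 = k ^ 2 := by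
    calc sfD a * sfD b * (sfU a * sfU b) ^ 2
        = (sfU a ^ 2 * sfD a) * (sfU b ^ 2 * sfD b) := by ring
      _ = a * b := by rw [hda, hdb]
      _ = k ^ 2 := h
  have hu : sfU a ≠ 0 := by
    rintro h0; rw [h0] at hda; simp at hda; omega
  have hv : sfU b ≠ 0 := by
    rintro h0; rw [h0] at hdb; simp at hdb; omega
  have hdvd : sfU a * sfU b ∣ k := by
    refine (Nat.pow_dvd_pow_iff two_ne_zero).mp ⟨sfD a * sfD b, ?_⟩
    rw [← hkey]; ring
  obtain ⟨m, rfl⟩ := hdvd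
  have huv : 0 < (sfU a * sfU b) ^ 2 := by positivity
  have hm : sfD a * sfD b = m ^ 2 := by
    have h2 : (sfD a * sfD b) * (sfU a * sfU b) ^ 2 = m ^ 2 * (sfU a * sfU b) ^ 2 := by
      rw [hkey]; ring
    exact Nat.eq_of_mul_eq_mul_right huv h2
  exact sf_eq hsa hsb hm

open scoped Classical in
/-- Counting pairs `(a,b) ∈ [1,N]²` with `a*b` a perfect square. -/
lemma count_pairs (N : ℕ) :
    ((Finset.Icc 1 N ×ˢ Finset.Icc 1 N).filter
      (fun p : ℕ × ℕ => ∃ k : ℕ, p.1 * p.2 = k ^ 2)).card ≤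
      ∑ d ∈ Finset.Icc 1 N, N / d := by
  classical
  set B : Finset (ℕ × ℕ × ℕ) := (Finset.Icc 1 N).biUnion (fun d =>
      {d} ×ˢ (Finset.Icc 1 (Nat.sqrt (N / d)) ×ˢ Finset.Icc 1 (Nat.sqrt (N / d)))) with hB
  have hmem : ∀ p ∈ (Finset.Icc 1 N ×ˢ Finset.Icc 1 N).filter
      (fun p : ℕ × ℕ => ∃ k : ℕ, p.1 * p.2 = k ^ 2),
      (sfD p.1, sfU p.1, sfU p.2) ∈ B := by
    rintro ⟨a, b⟩ hp
    simp only [mem_filter, mem_product, mem_Icc] at hp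
    obtain ⟨⟨⟨ha1, haN⟩, hb1, hbN⟩, k, hk⟩ := hp
    obtain ⟨hda, hsa⟩ := sf_spec a
    obtain ⟨hdb, hsb⟩ := sf_spec b
    have hde : sfD a = sfD b := sfD_eq ha1 hb1 hk
    have hd0 : 0 < sfD a := Nat.pos_of_ne_zero hsa.ne_zero
    have hu1 : 1 ≤ sfU a := by
      rcases Nat.eq_zero_or_pos (sfU a) with h0 | h
      · rw [h0] at hda; simp at hda; omega
      · exact h
    have hv1 : 1 ≤ sfU b := by
      rcases Nat.eq_zero_or_pos (sfU b) with h0 | h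
      · rw [h0] at hdb; simp at hdb; omega
      · exact h
    have hdvd : sfD a ∣ a := ⟨sfU a ^ 2, hda.symm.trans (mul_comm _ _)⟩
    have hdle : sfD a ≤ N := le_trans (Nat.le_of_dvd (by omega) hdvd) haN
    have hule : sfU a ≤ Nat.sqrt (N / sfD a) := by
      rw [Nat.le_sqrt, Nat.le_div_iff_mul_le hd0]
      calc sfU a * sfU a * sfD a = sfU a ^ 2 * sfD a := by ring
        _ = a := hda
        _ ≤ N := haN
    have hvle : sfU b ≤ Nat.sqrt (N / sfD a) := by
      rw [Nat.le_sqrt, Nat.le_div_iff_mul_le hd0, hde]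
      calc sfU b * sfU b * sfD b = sfU b ^ 2 * sfD b := by ring
        _ = b := hdb
        _ ≤ N := hbN
    simp only [hB, mem_biUnion, mem_product, mem_Icc, mem_singleton]
    exact ⟨sfD a, ⟨hd0, hdle⟩, rfl, ⟨hu1, hule⟩, hv1, hvle⟩
  have hinj : Set.InjOn (fun p : ℕ × ℕ => (sfD p.1, sfU p.1, sfU p.2))
      ((Finset.Icc 1 N ×ˢ Finset.Icc 1 N).filter
        (fun p : ℕ × ℕ => ∃ k : ℕ, p.1 * p.2 = k ^ 2)) := by
    rintro ⟨a, b⟩ hp ⟨a', b'⟩ hp' heq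
    simp only [coe_filter, Set.mem_setOf_eq, mem_product, mem_Icc, mem_coe] at hp hp'
    obtain ⟨⟨⟨ha1, _⟩, hb1, _⟩, k, hk⟩ := hp
    obtain ⟨⟨⟨ha1', _⟩, hb1', _⟩, k', hk'⟩ := hp'
    simp only [Prod.mk.injEq] at heq
    obtain ⟨h1, h2, h3⟩ := heq
    have hde : sfD a = sfD b := sfD_eq ha1 hb1 hk
    have hde' : sfD a' = sfD b' := sfD_eq ha1' hb1' hk'
    have hea : a = a' := by
      rw [← (sf_spec a).1, ← (sf_spec a').1, h1, h2]
    have heb : b = b' := by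
      rw [← (sf_spec b).1, ← (sf_spec b').1, h3, ← hde, ← hde', h1]
    simp only [Prod.mk.injEq]
    exact ⟨hea, heb⟩
  calc ((Finset.Icc 1 N ×ˢ Finset.Icc 1 N).filter
      (fun p : ℕ × ℕ => ∃ k : ℕ, p.1 * p.2 = k ^ 2)).card ≤ B.card :=
        Finset.card_le_card_of_injOn _ hmem hinj
    _ ≤ ∑ d ∈ Finset.Icc 1 N, ({d} ×ˢ (Finset.Icc 1 (Nat.sqrt (N / d)) ×ˢ
          Finset.Icc 1 (Nat.sqrt (N / d)))).card := Finset.card_biUnion_le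
    _ ≤ ∑ d ∈ Finset.Icc 1 N, N / d := by
        refine Finset.sum_le_sum fun d hd => ?_
        rw [Finset.card_product, Finset.card_product, Finset.card_singleton,
          Nat.card_Icc]
        simp only [one_mul, Nat.add_sub_cancel]
        exact Nat.sqrt_le _

theorem stmt_7 (ε : ℝ) (hε : 0 < ε) :
    ∃ C : ℝ, 0 < C ∧ ∀ N : ℕ, 1 ≤ N →
      (Nat.card {q : ℤ × ℤ // |q.1| ≤ (N : ℤ) ∧ |q.2| ≤ (N : ℤ) ∧
          ∃ r : ℚ, (-(q.1 * q.2) : ℚ) = r ^ 2} : ℝ) ≤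
        C * (N : ℝ) ^ ((1 : ℝ) + ε) := by
  classical
  refine ⟨8 + 2 / ε, by positivity, fun N hN => ?_⟩
  set S : Finset (ℤ × ℤ) := (Finset.Icc (-(N : ℤ)) N ×ˢ Finset.Icc (-(N : ℤ)) N).filter
    (fun q : ℤ × ℤ => ∃ k : ℕ, q.1 * q.2 = -((k : ℤ) ^ 2)) with hS
  have hset : {q : ℤ × ℤ | |q.1| ≤ (N : ℤ) ∧ |q.2| ≤ (N : ℤ) ∧
      ∃ r : ℚ, (-(q.1 * q.2) : ℚ) = r ^ 2} = ↑S := by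
    ext ⟨A, B⟩
    simp only [Set.mem_setOf_eq, hS, coe_filter, mem_product, mem_Icc, Set.mem_setOf_eq,
      abs_le, mem_coe]
    constructor
    · rintro ⟨h1, h2, r, hr⟩
      refine ⟨⟨h1, h2⟩, ?_⟩
      have hsq : IsSquare ((-(A * B) : ℤ) : ℚ) := ⟨r, by push_cast; rw [hr]; ring⟩
      rw [Rat.isSquare_intCast_iff] at hsq
      obtain ⟨s, hs⟩ := hsq
      refine ⟨s.natAbs, ?_⟩
      have : (s.natAbs : ℤ) ^ 2 = s * s := by
        rw [sq]; exact_mod_cast Int.natAbs_mul_self' s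
      omega
    · rintro ⟨⟨h1, h2⟩, k, hk⟩
      exact ⟨h1, h2, (k : ℚ), by rw_mod_cast [hk]; push_cast; ring⟩
  have hcard : Nat.card {q : ℤ × ℤ // |q.1| ≤ (N : ℤ) ∧ |q.2| ≤ (N : ℤ) ∧
      ∃ r : ℚ, (-(q.1 * q.2) : ℚ) = r ^ 2} = S.card := by
    rw [show {q : ℤ × ℤ // |q.1| ≤ (N : ℤ) ∧ |q.2| ≤ (N : ℤ) ∧
      ∃ r : ℚ, (-(q.1 * q.2) : ℚ) = r ^ 2} = {q : ℤ × ℤ // q ∈ ({q : ℤ × ℤ | |q.1| ≤ (N : ℤ) ∧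
        |q.2| ≤ (N : ℤ) ∧ ∃ r : ℚ, (-(q.1 * q.2) : ℚ) = r ^ 2})} from rfl,
      Nat.card_coe_set_eq, hset, Set.ncard_coe_finset]
  set P : Finset (ℕ × ℕ) := (Finset.Icc 1 N ×ˢ Finset.Icc 1 N).filter
    (fun p : ℕ × ℕ => ∃ k : ℕ, p.1 * p.2 = k ^ 2) with hP
  have hsplit : S.card ≤ (2 * N + 1) + (2 * N + 1) + 2 * P.card := by
    have hsub : S ⊆ (S.filter (fun q => q.1 = 0)) ∪ (S.filter (fun q => q.2 = 0)) ∪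
        ((S.filter (fun q => 0 < q.1 ∧ q.2 < 0)) ∪ (S.filter (fun q => q.1 < 0 ∧ 0 < q.2))) := by
      intro q hq
      have hq' := hq
      simp only [hS, mem_filter, mem_product, mem_Icc] at hq'
      obtain ⟨-, k, hk⟩ := hq'
      simp only [mem_union, mem_filter]
      have hprod : q.1 * q.2 ≤ 0 := by nlinarith [sq_nonneg (k : ℤ)]
      rcases lt_trichotomy q.1 0 with h1 | h1 | h1
      · rcases lt_trichotomy q.2 0 with h2 | h2 | h2
        · nlinarith
        · exact Or.inl (Or.inr ⟨hq, h2⟩)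
        · exact Or.inr (Or.inr ⟨hq, h1, h2⟩)
      · exact Or.inl (Or.inl ⟨hq, h1⟩)
      · rcases lt_trichotomy q.2 0 with h2 | h2 | h2
        · exact Or.inr (Or.inl ⟨hq, h1, h2⟩)
        · exact Or.inl (Or.inr ⟨hq, h2⟩)
        · nlinarith
    have c1 : (S.filter (fun q => q.1 = 0)).card ≤ 2 * N + 1 := by
      calc (S.filter (fun q => q.1 = 0)).card
          ≤ ({(0 : ℤ)} ×ˢ Finset.Icc (-(N : ℤ)) N).card := by
            apply Finset.card_le_card
            intro q hq
            simp only [mem_filter, hS, mem_product, mem_Icc, mem_singleton] at hq ⊢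
            obtain ⟨⟨⟨⟨hA1, hA2⟩, hB1, hB2⟩, -⟩, h0⟩ := hq
            exact ⟨h0, hB1, hB2⟩
        _ = 2 * N + 1 := by
            rw [Finset.card_product, Finset.card_singleton, Int.card_Icc]
            omega
    have c2 : (S.filter (fun q => q.2 = 0)).card ≤ 2 * N + 1 := by
      calc (S.filter (fun q => q.2 = 0)).card
          ≤ (Finset.Icc (-(N : ℤ)) N ×ˢ {(0 : ℤ)}).card := by
            apply Finset.card_le_card
            intro q hq
            simp only [mem_filter, hS, mem_product, mem_Icc, mem_singleton] at hq ⊢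
            obtain ⟨⟨⟨⟨hA1, hA2⟩, hB1, hB2⟩, -⟩, h0⟩ := hq
            exact ⟨⟨hA1, hA2⟩, h0⟩
        _ = 2 * N + 1 := by
            rw [Finset.card_product, Finset.card_singleton, Int.card_Icc]
            omega
    have c3 : (S.filter (fun q => 0 < q.1 ∧ q.2 < 0)).card ≤ P.card := by
      apply Finset.card_le_card_of_injOn (fun q => (q.1.toNat, (-q.2).toNat))
      · intro q hq
        simp only [mem_coe, mem_filter, hS, mem_product, mem_Icc] at hq
        obtain ⟨⟨⟨⟨hA1, hA2⟩, hB1, hB2⟩, k, hk⟩, hApos, hBneg⟩ := hq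
        simp only [mem_coe, hP, mem_filter, mem_product, mem_Icc]
        refine ⟨⟨⟨by omega, by omega⟩, by omega, by omega⟩, k, ?_⟩
        have : (q.1.toNat : ℤ) * ((-q.2).toNat : ℤ) = (k : ℤ) ^ 2 := by
          rw [Int.toNat_of_nonneg (by omega), Int.toNat_of_nonneg (by omega)]
          nlinarith
        exact_mod_cast this
      · rintro ⟨A, B⟩ hq ⟨A', B'⟩ hq' heq
        simp only [mem_coe, mem_filter] at hq hq'
        have h1 : (0 : ℤ) < A := hq.2.1
        have h2 : B < 0 := hq.2.2
        have h1' : (0 : ℤ) < A' := hq'.2.1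
        have h2' : B' < 0 := hq'.2.2
        simp only [Prod.mk.injEq] at heq ⊢
        omega
    have c4 : (S.filter (fun q => q.1 < 0 ∧ 0 < q.2)).card ≤ P.card := by
      apply Finset.card_le_card_of_injOn (fun q => ((-q.1).toNat, q.2.toNat))
      · intro q hq
        simp only [mem_coe, mem_filter, hS, mem_product, mem_Icc] at hq
        obtain ⟨⟨⟨⟨hA1, hA2⟩, hB1, hB2⟩, k, hk⟩, hAneg, hBpos⟩ := hq
        simp only [mem_coe, hP, mem_filter, mem_product, mem_Icc]
        refine ⟨⟨⟨by omega, by omega⟩, by omega, by omega⟩, k, ?_⟩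
        have : ((-q.1).toNat : ℤ) * (q.2.toNat : ℤ) = (k : ℤ) ^ 2 := by
          rw [Int.toNat_of_nonneg (by omega), Int.toNat_of_nonneg (by omega)]
          nlinarith
        exact_mod_cast this
      · rintro ⟨A, B⟩ hq ⟨A', B'⟩ hq' heq
        simp only [mem_coe, mem_filter] at hq hq'
        have h1 : A < 0 := hq.2.1
        have h2 : (0 : ℤ) < B := hq.2.2
        have h1' : A' < 0 := hq'.2.1
        have h2' : (0 : ℤ) < B' := hq'.2.2
        simp only [Prod.mk.injEq] at heq ⊢
        omega
    calc S.card ≤ _ := Finset.card_le_card hsub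
      _ ≤ _ := Finset.card_union_le _ _
      _ ≤ ((S.filter (fun q => q.1 = 0)) ∪ (S.filter (fun q => q.2 = 0))).card +
            ((S.filter (fun q => 0 < q.1 ∧ q.2 < 0)).card +
             (S.filter (fun q => q.1 < 0 ∧ 0 < q.2)).card) := by
          gcongr; exact Finset.card_union_le _ _
      _ ≤ ((S.filter (fun q => q.1 = 0)).card + (S.filter (fun q => q.2 = 0)).card) +
            ((S.filter (fun q => 0 < q.1 ∧ q.2 < 0)).card +
             (S.filter (fun q => q.1 < 0 ∧ 0 < q.2)).card) := by
          gcongr; exact Finset.card_union_le _ _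
      _ ≤ (2 * N + 1) + (2 * N + 1) + 2 * P.card := by omega
  have hPsum : P.card ≤ ∑ d ∈ Finset.Icc 1 N, N / d := count_pairs N
  rw [hcard]
  have hN1 : (1 : ℝ) ≤ (N : ℝ) := by exact_mod_cast hN
  have hN0 : (0 : ℝ) < (N : ℝ) := by linarith
  have hsumR : ((∑ d ∈ Finset.Icc 1 N, N / d : ℕ) : ℝ) ≤ (N : ℝ) * (1 + Real.log N) := by
    calc ((∑ d ∈ Finset.Icc 1 N, N / d : ℕ) : ℝ)
        = ∑ d ∈ Finset.Icc 1 N, ((N / d : ℕ) : ℝ) := by push_cast; ring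
      _ ≤ ∑ d ∈ Finset.Icc 1 N, (N : ℝ) * (d : ℝ)⁻¹ := by
          refine Finset.sum_le_sum fun d hd => ?_
          calc ((N / d : ℕ) : ℝ) ≤ (N : ℝ) / (d : ℝ) := Nat.cast_div_le
            _ = (N : ℝ) * (d : ℝ)⁻¹ := div_eq_mul_inv _ _
      _ = (N : ℝ) * ∑ d ∈ Finset.Icc 1 N, (d : ℝ)⁻¹ := by rw [Finset.mul_sum]
      _ = (N : ℝ) * (harmonic N : ℝ) := by
          congr 1
          rw [harmonic_eq_sum_Icc]; push_cast; ring
      _ ≤ (N : ℝ) * (1 + Real.log N) := by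
          have := harmonic_le_one_add_log N
          nlinarith [this]
  have hlog : Real.log N ≤ (N : ℝ) ^ ε / ε := by
    have h1 : Real.log ((N : ℝ) ^ ε) = ε * Real.log N := Real.log_rpow hN0 ε
    have h2 : Real.log ((N : ℝ) ^ ε) ≤ (N : ℝ) ^ ε - 1 :=
      Real.log_le_sub_one_of_pos (Real.rpow_pos_of_pos hN0 ε)
    rw [h1] at h2
    rw [le_div_iff₀ hε]
    nlinarith [Real.rpow_pos_of_pos hN0 ε]
  have hpow : (N : ℝ) ^ ((1 : ℝ) + ε) = (N : ℝ) * (N : ℝ) ^ ε := by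
    rw [Real.rpow_add hN0, Real.rpow_one]
  have hNle : (N : ℝ) ≤ (N : ℝ) ^ ((1 : ℝ) + ε) := by
    calc (N : ℝ) = (N : ℝ) ^ (1 : ℝ) := (Real.rpow_one _).symm
      _ ≤ (N : ℝ) ^ ((1 : ℝ) + ε) := Real.rpow_le_rpow_of_exponent_le hN1 (by linarith)
  have hScard : (S.card : ℝ) ≤ (4 * N + 2) + 2 * ((N : ℝ) * (1 + Real.log N)) := by
    have h0 : (S.card : ℝ) ≤ (((2 * N + 1) + (2 * N + 1) + 2 * P.card : ℕ) : ℝ) := by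
      exact_mod_cast hsplit
    have hP2 : ((P.card : ℕ) : ℝ) ≤ (N : ℝ) * (1 + Real.log N) :=
      le_trans (by exact_mod_cast hPsum) hsumR
    push_cast at h0 ⊢
    linarith
  calc (S.card : ℝ) ≤ (4 * N + 2) + 2 * ((N : ℝ) * (1 + Real.log N)) := hScard
    _ = 6 * (N : ℝ) + 2 + 2 * (N : ℝ) * Real.log N := by ring
    _ ≤ 8 * (N : ℝ) + (2 / ε) * ((N : ℝ) * (N : ℝ) ^ ε) := by
        have hl := mul_le_mul_of_nonneg_left hlog (by positivity : (0 : ℝ) ≤ 2 * (N : ℝ))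
        have he : 2 * (N : ℝ) * ((N : ℝ) ^ ε / ε) = (2 / ε) * ((N : ℝ) * (N : ℝ) ^ ε) := by
          field_simp
        nlinarith [hl, he]
    _ = 8 * (N : ℝ) + (2 / ε) * (N : ℝ) ^ ((1 : ℝ) + ε) := by rw [hpow]
    _ ≤ 8 * (N : ℝ) ^ ((1 : ℝ) + ε) + (2 / ε) * (N : ℝ) ^ ((1 : ℝ) + ε) := by
        have h8 : 8 * (N : ℝ) ≤ 8 * (N : ℝ) ^ ((1 : ℝ) + ε) := by linarith
        linarith
    _ = (8 + 2 / ε) * (N : ℝ) ^ ((1 : ℝ) + ε) := by ring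
end
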